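/- arXiv:2311.08343 — 4 statements merged into one kernel-verified Lean document; each statement's English description precedes it below -/
import Mathlib

section
/- Let N ≥ 1. Define S(A) = Σ_{k≥1} |Tr(A^k)|²/k² for a unitary matrix A. Then the distribution of the random variable S(A) when A is Haar-distributed on U(N) is the same as the distribution of S(A) when A is Haar-distributed on the special unitary group SU(N): for every x ≥ 0, the Haar measure of {A ∈ U(N) : S(A) ≤ x} equals the Haar measure of {A ∈ SU(N) : S(A) ≤ x}. -/
open MeasureTheory ProbabilityTheory Matrix
open scoped NNReal ENNReal

noncomputable section

instance matrixMeasurableSpace {m n α : Type*} [MeasurableSpace α] :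
    MeasurableSpace (Matrix m n α) :=
  show MeasurableSpace (m → n → α) from inferInstance

/-- `S(A) = Σ_{k ≥ 1} |Tr(A^k)|² / k²` for a complex matrix `A`. -/
def S (N : ℕ) (A : Matrix (Fin N) (Fin N) ℂ) : ℝ :=
  ∑' k : ℕ, ‖(A ^ (k + 1)).trace‖ ^ 2 / ((k : ℝ) + 1) ^ 2

instance matrixBorelSpace {N : ℕ} : BorelSpace (Matrix (Fin N) (Fin N) ℂ) :=
  ⟨(Pi.borelSpace (X := fun _ : Fin N => Fin N → ℂ)).measurable_eq⟩

instance matrixSecondCountable {N : ℕ} :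
    SecondCountableTopology (Matrix (Fin N) (Fin N) ℂ) :=
  inferInstanceAs (SecondCountableTopology (Fin N → Fin N → ℂ))

lemma measurable_S (N : ℕ) : Measurable (S N) := by
  have h : S N = fun A : Matrix (Fin N) (Fin N) ℂ =>
      ((∑' k : ℕ, ‖(A ^ (k + 1)).trace‖₊ ^ 2 / ((k : ℝ≥0) + 1) ^ 2 : ℝ≥0) : ℝ) := by
    funext A
    rw [S, NNReal.coe_tsum]
    refine tsum_congr fun k => ?_
    push_cast
    rfl
  rw [h]
  refine NNReal.continuous_coe.measurable.comp ?_
  refine Measurable.nnreal_tsum fun k => ?_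
  have hc : Continuous fun A : Matrix (Fin N) (Fin N) ℂ => (A ^ (k + 1)).trace :=
    (continuous_pow (k + 1)).matrix_trace
  exact ((hc.measurable.nnnorm.pow_const 2).div_const _)

lemma S_smul (N : ℕ) (z : ℂ) (hz : ‖z‖ = 1) (A : Matrix (Fin N) (Fin N) ℂ) :
    S N (z • A) = S N A := by
  unfold S
  refine tsum_congr fun k => ?_
  rw [smul_pow, trace_smul, norm_smul, norm_pow, hz, one_pow, one_mul]

lemma trace_pow_mul_comm (N : ℕ) (A B : Matrix (Fin N) (Fin N) ℂ) (k : ℕ) :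
    ((A * B) ^ (k + 1)).trace = ((B * A) ^ (k + 1)).trace := by
  have h : ∀ n : ℕ, (A * B) ^ n * A = A * (B * A) ^ n := by
    intro n
    induction n with
    | zero => simp
    | succ n ih =>
        rw [pow_succ', mul_assoc, ih, pow_succ']
        simp [mul_assoc]
  calc ((A * B) ^ (k + 1)).trace = ((A * B) ^ k * (A * B)).trace := by rw [← pow_succ]
    _ = (((A * B) ^ k * A) * B).trace := by rw [mul_assoc]
    _ = (B * ((A * B) ^ k * A)).trace := by rw [trace_mul_comm]
    _ = (B * (A * (B * A) ^ k)).trace := by rw [h k]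
    _ = ((B * A) * (B * A) ^ k).trace := by rw [← mul_assoc]
    _ = ((B * A) ^ (k + 1)).trace := by rw [← pow_succ']

lemma S_mul_comm (N : ℕ) (A B : Matrix (Fin N) (Fin N) ℂ) :
    S N (A * B) = S N (B * A) := by
  unfold S
  exact tsum_congr fun k => by rw [trace_pow_mul_comm]

/-- The distribution of `S(A) = Σ_{k≥1} |Tr(A^k)|²/k²` is the same when `A` is Haar-distributed
on `U(N)` as when `A` is Haar-distributed on `SU(N)`. -/
theorem traceSum_distribution_unitary_eq_specialUnitary
    (N : ℕ) (hN : 1 ≤ N)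
    (μ ν : Measure (Matrix (Fin N) (Fin N) ℂ))
    [IsProbabilityMeasure μ] [IsProbabilityMeasure ν]
    (hμsupp : μ {A | A ∈ Matrix.unitaryGroup (Fin N) ℂ} = 1)
    (hμinv : ∀ g ∈ Matrix.unitaryGroup (Fin N) ℂ, μ.map (fun A => g * A) = μ)
    (hνsupp : ν {A | A ∈ Matrix.specialUnitaryGroup (Fin N) ℂ} = 1)
    (hνinv : ∀ g ∈ Matrix.specialUnitaryGroup (Fin N) ℂ, ν.map (fun A => g * A) = ν) :
    ∀ (x : ℝ), 0 ≤ x → μ {A | S N A ≤ x} = ν {A | S N A ≤ x} := by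
  intro x _hx
  set T : Set (Matrix (Fin N) (Fin N) ℂ) := {A | S N A ≤ x} with hT
  have hTmeas : MeasurableSet T := measurableSet_le (measurable_S N) measurable_const
  set f : Matrix (Fin N) (Fin N) ℂ → ℝ≥0∞ := T.indicator 1 with hfdef
  have hf : Measurable f := measurable_one.indicator hTmeas
  -- a.e. membership
  have hUmeas : MeasurableSet {A : Matrix (Fin N) (Fin N) ℂ | A ∈ Matrix.unitaryGroup (Fin N) ℂ} := by
    have : {A : Matrix (Fin N) (Fin N) ℂ | A ∈ Matrix.unitaryGroup (Fin N) ℂ}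
        = (fun A : Matrix (Fin N) (Fin N) ℂ => A * star A) ⁻¹' {1} := by
      ext A; simp [Matrix.mem_unitaryGroup_iff]
    rw [this]
    exact (continuous_id.matrix_mul continuous_star).measurable (measurableSet_singleton 1)
  have hSUmeas : MeasurableSet
      {A : Matrix (Fin N) (Fin N) ℂ | A ∈ Matrix.specialUnitaryGroup (Fin N) ℂ} := by
    have : {A : Matrix (Fin N) (Fin N) ℂ | A ∈ Matrix.specialUnitaryGroup (Fin N) ℂ}
        = {A : Matrix (Fin N) (Fin N) ℂ | A ∈ Matrix.unitaryGroup (Fin N) ℂ} ∩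
          (fun A : Matrix (Fin N) (Fin N) ℂ => A.det) ⁻¹' {1} := by
      ext A; simp [Matrix.mem_specialUnitaryGroup_iff]
    rw [this]
    exact hUmeas.inter ((continuous_id.matrix_det).measurable (measurableSet_singleton 1))
  have hμae : ∀ᵐ g ∂μ, g ∈ Matrix.unitaryGroup (Fin N) ℂ := by
    rw [ae_iff]
    have : {a : Matrix (Fin N) (Fin N) ℂ | ¬ a ∈ Matrix.unitaryGroup (Fin N) ℂ}
        = {A : Matrix (Fin N) (Fin N) ℂ | A ∈ Matrix.unitaryGroup (Fin N) ℂ}ᶜ := rfl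
    rw [this, measure_compl hUmeas (measure_ne_top _ _), hμsupp, measure_univ, tsub_self]
  have hνae : ∀ᵐ h ∂ν, h ∈ Matrix.specialUnitaryGroup (Fin N) ℂ := by
    rw [ae_iff]
    have : {a : Matrix (Fin N) (Fin N) ℂ | ¬ a ∈ Matrix.specialUnitaryGroup (Fin N) ℂ}
        = {A : Matrix (Fin N) (Fin N) ℂ | A ∈ Matrix.specialUnitaryGroup (Fin N) ℂ}ᶜ := rfl
    rw [this, measure_compl hSUmeas (measure_ne_top _ _), hνsupp, measure_univ, tsub_self]
  -- measurability of the joint map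
  have hmul : Measurable fun p : Matrix (Fin N) (Fin N) ℂ × Matrix (Fin N) (Fin N) ℂ =>
      p.1 * p.2 := (continuous_fst.matrix_mul continuous_snd).measurable
  have hjoint : Measurable (Function.uncurry fun g h : Matrix (Fin N) (Fin N) ℂ => f (g * h)) :=
    hf.comp hmul
  -- the two iterated integrals
  have hswap :
      ∫⁻ g, ∫⁻ h, f (g * h) ∂ν ∂μ = ∫⁻ h, ∫⁻ g, f (g * h) ∂μ ∂ν :=
    lintegral_lintegral_swap hjoint.aemeasurable
  -- LHS equals ν T
  have hL : ∫⁻ g, ∫⁻ h, f (g * h) ∂ν ∂μ = ν T := by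
    have : ∀ᵐ g ∂μ, ∫⁻ h, f (g * h) ∂ν = ν T := by
      filter_upwards [hμae] with g hg
      obtain ⟨z, hz⟩ := IsAlgClosed.exists_pow_nat_eq (k := ℂ) (g.det)⁻¹ (lt_of_lt_of_le one_pos hN)
      have hdet : ‖g.det‖ = 1 := by
        have hd := Matrix.det_of_mem_unitary hg
        have h1 : (starRingEnd ℂ) g.det * g.det = 1 := hd.1
        have h2 : Complex.normSq g.det = 1 := by
          have := congrArg Complex.re (Complex.normSq_eq_conj_mul_self (z := g.det) ▸ h1)
          simpa using this
        have h3 : ‖g.det‖ ^ 2 = 1 := by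
          rw [← Complex.sq_norm] at h2; exact h2
        have h4 : (0:ℝ) ≤ ‖g.det‖ := norm_nonneg _
        have : ‖g.det‖ = 1 := by nlinarith
        exact this
      have hznorm : ‖z‖ = 1 := by
        have h1 : ‖z‖ ^ N = 1 ^ N := by
          rw [← norm_pow, hz, norm_inv, hdet, inv_one, one_pow]
        exact (pow_left_inj₀ (norm_nonneg z) zero_le_one
          (Nat.one_le_iff_ne_zero.mp hN)).mp h1
      have hzz : z * (starRingEnd ℂ) z = 1 := by
        rw [Complex.mul_conj]
        norm_cast
        rw [Complex.normSq_eq_norm_sq]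
        simp [hznorm]
      have hgdet : g.det ≠ 0 := by
        intro h0; rw [h0] at hdet; simp at hdet
      have hg0 : z • g ∈ Matrix.specialUnitaryGroup (Fin N) ℂ := by
        rw [Matrix.mem_specialUnitaryGroup_iff]
        constructor
        · rw [Matrix.mem_unitaryGroup_iff]
          have hgu : g * star g = 1 := Matrix.mem_unitaryGroup_iff.mp hg
          rw [star_smul, smul_mul_assoc, mul_smul_comm, hgu, smul_smul]
          simp only [star_trivial, RCLike.star_def]
          rw [hzz, one_smul]
        · rw [Matrix.det_smul, Fintype.card_fin, hz, inv_mul_cancel₀ hgdet]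
      have hfe : ∀ h : Matrix (Fin N) (Fin N) ℂ, f (g * h) = f ((z • g) * h) := by
        intro h
        have hS : S N ((z • g) * h) = S N (g * h) := by
          rw [smul_mul_assoc, S_smul N z hznorm]
        simp only [hfdef, Set.indicator_apply, hT, Set.mem_setOf_eq, hS, Pi.one_apply]
      calc ∫⁻ h, f (g * h) ∂ν = ∫⁻ h, f ((z • g) * h) ∂ν := by
            exact lintegral_congr fun h => hfe h
        _ = ∫⁻ h, f h ∂(ν.map (fun A => (z • g) * A)) := by
            rw [lintegral_map hf (measurable_const_mul _)]
        _ = ∫⁻ h, f h ∂ν := by rw [hνinv _ hg0]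
        _ = ν T := lintegral_indicator_one hTmeas
    rw [lintegral_congr_ae this, lintegral_const, measure_univ, mul_one]
  -- RHS equals μ T
  have hR : ∫⁻ h, ∫⁻ g, f (g * h) ∂μ ∂ν = μ T := by
    have : ∀ᵐ h ∂ν, ∫⁻ g, f (g * h) ∂μ = μ T := by
      filter_upwards [hνae] with h hh
      have hhU : h ∈ Matrix.unitaryGroup (Fin N) ℂ :=
        (Matrix.mem_specialUnitaryGroup_iff.mp hh).1
      have hfe : ∀ g : Matrix (Fin N) (Fin N) ℂ, f (g * h) = f (h * g) := by
        intro g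
        have hS : S N (g * h) = S N (h * g) := S_mul_comm N g h
        simp only [hfdef, Set.indicator_apply, hT, Set.mem_setOf_eq, hS, Pi.one_apply]
      calc ∫⁻ g, f (g * h) ∂μ = ∫⁻ g, f (h * g) ∂μ := lintegral_congr fun g => hfe g
        _ = ∫⁻ g, f g ∂(μ.map (fun A => h * A)) := by
            rw [lintegral_map hf (measurable_const_mul _)]
        _ = ∫⁻ g, f g ∂μ := by rw [hμinv _ hhU]
        _ = μ T := lintegral_indicator_one hTmeas
    rw [lintegral_congr_ae this, lintegral_const, measure_univ, mul_one]
  rw [← hR, ← hswap, hL]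
end
end

section
/- Let N ≥ 1 and define K(x,y) = 2 Σ_{j=0}^{N−1} sin(((2j+1)/2)x)·sin(((2j+1)/2)y). Let ε(a) = 1 if a is odd and 1 ≤ a ≤ 2N−1, and ε(a) = 0 otherwise. Then for all integers k, ℓ ≥ 1: (1/π) ∫₀^π K(x,x) cos(kx) dx = −ε(k)/2; if k = ℓ then (1/π²) ∫₀^π ∫₀^π K(x,y)² cos(kx) cos(ℓy) dx dy = (2N − k)⁺/4; and if k ≠ ℓ then (1/π²) ∫₀^π ∫₀^π K(x,y)² cos(kx) cos(ℓy) dx dy = −ε(k+ℓ)/2, where x⁺ = max{x, 0}. -/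
noncomputable section

/-- The kernel `K(x,y) = 2 Σ_{j=0}^{N−1} sin(((2j+1)/2)x)·sin(((2j+1)/2)y)`. -/
def K (N : ℕ) (x y : ℝ) : ℝ :=
  2 * ∑ j ∈ Finset.range N,
    Real.sin ((2 * (j : ℝ) + 1) / 2 * x) * Real.sin ((2 * (j : ℝ) + 1) / 2 * y)

/-- `ε(a) = 1` if `a` is odd and `1 ≤ a ≤ 2N−1`, and `ε(a) = 0` otherwise. -/
def eps (N a : ℕ) : ℝ :=
  if Odd a ∧ 1 ≤ a ∧ a ≤ 2 * N - 1 then 1 else 0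

open Real Finset

namespace KernelAux

/-- indicator of `|j − i| = m` -/
def aE (j i m : ℕ) : ℝ :=
  if ((j:ℤ) - i = m ∨ (j:ℤ) - i = -(m:ℤ)) then 1 else 0

/-- indicator of `j + i + 1 = m` -/
def aF (j i m : ℕ) : ℝ := if j + i + 1 = m then 1 else 0

lemma IC (c : ℤ) : ∫ x in (0:ℝ)..π, Real.cos (c*x) = if c = 0 then π else 0 := by
  by_cases h : c = 0
  · simp [h]
  · rw [if_neg h]
    have hc : (c:ℝ) ≠ 0 := Int.cast_ne_zero.2 h
    have := intervalIntegral.integral_comp_mul_left (a := (0:ℝ)) (b := π) (fun x => Real.cos x) hc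
    simp at this
    exact this

lemma CC (p q : ℤ) (hq : 1 ≤ q) :
    ∫ x in (0:ℝ)..π, Real.cos (p*x) * Real.cos (q*x)
      = if p = q ∨ p = -q then π/2 else 0 := by
  have key : ∀ x : ℝ, Real.cos (p*x) * Real.cos (q*x)
      = (Real.cos ((↑(p+q))*x) + Real.cos ((↑(p-q))*x))/2 := by
    intro x
    push_cast
    rw [show ((p:ℝ)+q)*x = p*x + q*x by ring, show ((p:ℝ)-q)*x = p*x - q*x by ring,
      Real.cos_add, Real.cos_sub]
    ring
  simp only [key]
  rw [intervalIntegral.integral_div, intervalIntegral.integral_add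
    ((by fun_prop : Continuous fun x:ℝ => Real.cos ((((p+q):ℤ):ℝ) * x)).intervalIntegrable _ _)
    ((by fun_prop : Continuous fun x:ℝ => Real.cos ((((p-q):ℤ):ℝ) * x)).intervalIntegrable _ _),
    IC, IC]
  have : ¬(p + q = 0 ∧ p - q = 0) := by omega
  split_ifs <;> (try (exfalso; omega)) <;> ring

lemma G (j i m : ℕ) (hm : 1 ≤ m) :
    ∫ x in (0:ℝ)..π,
        Real.sin ((2*(j:ℝ)+1)/2 * x) * Real.sin ((2*(i:ℝ)+1)/2 * x) * Real.cos ((m:ℝ)*x)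
      = π/4 * (aE j i m - aF j i m) := by
  have key : ∀ x : ℝ,
      Real.sin ((2*(j:ℝ)+1)/2 * x) * Real.sin ((2*(i:ℝ)+1)/2 * x) * Real.cos ((m:ℝ)*x)
      = (Real.cos ((((j:ℤ)-i : ℤ):ℝ)*x) * Real.cos ((((m:ℕ):ℤ):ℝ)*x)
          - Real.cos ((((j+i+1:ℕ):ℤ):ℝ)*x) * Real.cos ((((m:ℕ):ℤ):ℝ)*x))/2 := by
    intro x
    have h1 : (((j:ℤ)-i : ℤ):ℝ)*x = (2*(j:ℝ)+1)/2 * x - (2*(i:ℝ)+1)/2 * x := by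
      push_cast; ring
    have h2 : ((((j+i+1:ℕ)):ℤ):ℝ)*x = (2*(j:ℝ)+1)/2 * x + (2*(i:ℝ)+1)/2 * x := by
      push_cast; ring
    rw [h1, h2, Real.cos_sub, Real.cos_add]
    push_cast
    ring
  simp only [key]
  rw [intervalIntegral.integral_div, intervalIntegral.integral_sub
    ((by fun_prop : Continuous fun x:ℝ => Real.cos ((((j:ℤ)-i : ℤ):ℝ)*x) * Real.cos ((((m:ℕ):ℤ):ℝ)*x)).intervalIntegrable _ _)
    ((by fun_prop : Continuous fun x:ℝ => Real.cos ((((j+i+1:ℕ):ℤ):ℝ)*x) * Real.cos ((((m:ℕ):ℤ):ℝ)*x)).intervalIntegrable _ _),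
    CC _ _ (by exact_mod_cast hm), CC _ _ (by exact_mod_cast hm)]
  rw [aE, aF]
  have h3 : (((j+i+1:ℕ):ℤ) = (m:ℤ) ∨ ((j+i+1:ℕ):ℤ) = -(m:ℤ)) ↔ j + i + 1 = m := by omega
  rw [if_congr h3 rfl rfl]
  split_ifs <;> (try (exfalso; omega)) <;> ring

lemma sum_ite_unique (N : ℕ) (P : ℕ → Prop) [DecidablePred P] (m : ℕ)
    (hmem : ∀ i, P i → i = m) :
    ∑ i ∈ Finset.range N, (if P i then (1:ℝ) else 0) = if P m ∧ m < N then 1 else 0 := by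
  by_cases h : P m ∧ m < N
  · rw [if_pos h, Finset.sum_eq_single_of_mem m (Finset.mem_range.2 h.2)]
    · rw [if_pos h.1]
    · intro i _ hne
      rw [if_neg fun hp => hne (hmem i hp)]
  · rw [if_neg h]
    apply Finset.sum_eq_zero
    intro i hi
    rw [if_neg]
    intro hp
    have := hmem i hp
    subst this
    exact h ⟨hp, Finset.mem_range.1 hi⟩

lemma count_ite (N : ℕ) (P : ℕ → Prop) [DecidablePred P] :
    ∑ j ∈ Finset.range N, (if P j then (1:ℝ) else 0)
      = (((Finset.range N).filter P).card : ℝ) := by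
  simp [Finset.sum_boole]

lemma count_ge (N k : ℕ) :
    ∑ j ∈ Finset.range N, (if k ≤ j then (1:ℝ) else 0) = ((N - k : ℕ) : ℝ) := by
  rw [count_ite]
  congr 1
  rw [show (Finset.range N).filter (k ≤ ·) = Finset.Ico k N by
    ext j; simp [Finset.mem_Ico, and_comm]]
  rw [Nat.card_Ico]

lemma count_lt (N k : ℕ) :
    ∑ j ∈ Finset.range N, (if j + k < N then (1:ℝ) else 0) = ((N - k : ℕ) : ℝ) := by
  rw [count_ite]
  congr 1
  rw [show (Finset.range N).filter (· + k < N) = Finset.range (N - k) by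
    ext j; simp; omega]
  rw [Finset.card_range]

lemma S_E (N k : ℕ) (hk : 1 ≤ k) :
    ∑ j ∈ Finset.range N, ∑ i ∈ Finset.range N, aE j i k = 2 * ((N - k : ℕ) : ℝ) := by
  have step : ∀ j ∈ Finset.range N, ∑ i ∈ Finset.range N, aE j i k
      = (if k ≤ j then (1:ℝ) else 0) + (if j + k < N then (1:ℝ) else 0) := by
    intro j hj
    have hj' := Finset.mem_range.1 hj
    have split : ∀ i, aE j i k
        = (if ((j:ℤ) - i = k) then (1:ℝ) else 0) + (if ((j:ℤ) - i = -(k:ℤ)) then (1:ℝ) else 0) := by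
      intro i
      unfold aE
      split_ifs <;> (try (exfalso; omega)) <;> ring
    rw [Finset.sum_congr rfl fun i _ => split i, Finset.sum_add_distrib,
      sum_ite_unique N _ (j - k) (by omega), sum_ite_unique N _ (j + k) (by omega)]
    congr 1
    · exact if_congr (by omega) rfl rfl
    · exact if_congr (by omega) rfl rfl
  rw [Finset.sum_congr rfl step, Finset.sum_add_distrib, count_ge, count_lt]
  ring

lemma S_F (N k : ℕ) (hk : 1 ≤ k) :
    ∑ j ∈ Finset.range N, ∑ i ∈ Finset.range N, aF j i k
      = ((min k N - (k - N) : ℕ) : ℝ) := by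
  have step : ∀ j ∈ Finset.range N, ∑ i ∈ Finset.range N, aF j i k
      = (if j < k ∧ k ≤ N + j then (1:ℝ) else 0) := by
    intro j hj
    have hj' := Finset.mem_range.1 hj
    unfold aF
    rw [sum_ite_unique N _ (k - 1 - j) (by omega)]
    exact if_congr (by omega) rfl rfl
  rw [Finset.sum_congr rfl step, count_ite]
  congr 1
  rw [show (Finset.range N).filter (fun j => j < k ∧ k ≤ N + j) = Finset.Ico (k - N) (min k N) by
    ext j; simp [Finset.mem_Ico]; omega]
  rw [Nat.card_Ico]

lemma S_X (N k l : ℕ) (hk : 1 ≤ k) (hl : 1 ≤ l) :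
    ∑ j ∈ Finset.range N, ∑ i ∈ Finset.range N, aE j i k * aF j i l
      = if ((k+l) % 2 = 1 ∧ k < l ∧ k + l + 1 ≤ 2*N) then (2:ℝ) else 0 := by
  have step : ∀ j ∈ Finset.range N, ∑ i ∈ Finset.range N, aE j i k * aF j i l
      = (if (k ≤ j ∧ 2*j+1 = k+l) then (1:ℝ) else 0)
        + (if (2*j+1+k = l ∧ j + k < N) then (1:ℝ) else 0) := by
    intro j hj
    have hj' := Finset.mem_range.1 hj
    have split : ∀ i, aE j i k * aF j i l
        = (if ((j:ℤ) - i = k ∧ j + i + 1 = l) then (1:ℝ) else 0)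
          + (if ((j:ℤ) - i = -(k:ℤ) ∧ j + i + 1 = l) then (1:ℝ) else 0) := by
      intro i
      unfold aE aF
      split_ifs <;> (try (exfalso; omega)) <;> ring
    rw [Finset.sum_congr rfl fun i _ => split i, Finset.sum_add_distrib,
      sum_ite_unique N _ (j - k) (by omega), sum_ite_unique N _ (j + k) (by omega)]
    congr 1
    · exact if_congr (by omega) rfl rfl
    · exact if_congr (by omega) rfl rfl
  rw [Finset.sum_congr rfl step, Finset.sum_add_distrib,
    sum_ite_unique N _ ((k + l - 1)/2) (by omega),
    sum_ite_unique N _ ((l - 1 - k)/2) (by omega)]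
  have h1 : ((k ≤ (k+l-1)/2 ∧ 2*((k+l-1)/2)+1 = k+l) ∧ (k+l-1)/2 < N)
      ↔ ((k+l) % 2 = 1 ∧ k < l ∧ k + l + 1 ≤ 2*N) := by omega
  have h2 : ((2*((l-1-k)/2)+1+k = l ∧ (l-1-k)/2 + k < N) ∧ (l-1-k)/2 < N)
      ↔ ((k+l) % 2 = 1 ∧ k < l ∧ k + l + 1 ≤ 2*N) := by omega
  rw [if_congr h1 rfl rfl, if_congr h2 rfl rfl]
  split_ifs <;> ring

lemma comb_diag (N k : ℕ) (hk : 1 ≤ k) :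
    ∑ j ∈ Finset.range N, ∑ i ∈ Finset.range N,
        (aE j i k - aF j i k) * (aE j i k - aF j i k) = ((2*N - k : ℕ) : ℝ) := by
  have split : ∀ j i, (aE j i k - aF j i k) * (aE j i k - aF j i k)
      = aE j i k + aF j i k := by
    intro j i
    unfold aE aF
    split_ifs <;> (try (exfalso; omega)) <;> ring
  rw [Finset.sum_congr rfl fun j _ => Finset.sum_congr rfl fun i _ => split j i]
  simp only [Finset.sum_add_distrib]
  rw [S_E N k hk, S_F N k hk]
  have : 2*(N - k) + (min k N - (k - N)) = 2*N - k := by omega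
  push_cast [← this]
  ring

lemma comb_off (N k l : ℕ) (hk : 1 ≤ k) (hl : 1 ≤ l) (hkl : k ≠ l) :
    ∑ j ∈ Finset.range N, ∑ i ∈ Finset.range N,
        (aE j i k - aF j i k) * (aE j i l - aF j i l)
      = -2 * (if ((k+l) % 2 = 1 ∧ k + l + 1 ≤ 2*N) then (1:ℝ) else 0) := by
  have split : ∀ j i, (aE j i k - aF j i k) * (aE j i l - aF j i l)
      = -(aE j i k * aF j i l) + -(aE j i l * aF j i k) := by
    intro j i
    unfold aE aF
    split_ifs <;> (try (exfalso; omega)) <;> ring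
  rw [Finset.sum_congr rfl fun j _ => Finset.sum_congr rfl fun i _ => split j i]
  simp only [Finset.sum_add_distrib, Finset.sum_neg_distrib]
  rw [S_X N k l hk hl, S_X N l k hl hk]
  split_ifs <;> (try (exfalso; omega)) <;> ring

lemma single_int (N k : ℕ) (hk : 1 ≤ k) :
    ∫ x in (0:ℝ)..π, K N x x * Real.cos ((k:ℝ)*x)
      = -(π/2) * ∑ j ∈ Finset.range N, aF j j k := by
  have he : ∀ j : ℕ, aE j j k = 0 := by
    intro j; unfold aE; rw [if_neg]; omega
  calc ∫ x in (0:ℝ)..π, K N x x * Real.cos ((k:ℝ)*x)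
      = ∫ x in (0:ℝ)..π, ∑ j ∈ Finset.range N,
          2*(Real.sin ((2*(j:ℝ)+1)/2*x) * Real.sin ((2*(j:ℝ)+1)/2*x) * Real.cos ((k:ℝ)*x)) := by
        refine intervalIntegral.integral_congr fun x _ => ?_
        rw [K, Finset.mul_sum, Finset.sum_mul]
        exact Finset.sum_congr rfl fun j _ => by ring
    _ = ∑ j ∈ Finset.range N, ∫ x in (0:ℝ)..π,
          2*(Real.sin ((2*(j:ℝ)+1)/2*x) * Real.sin ((2*(j:ℝ)+1)/2*x) * Real.cos ((k:ℝ)*x)) :=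
        intervalIntegral.integral_finset_sum
          (fun j _ => Continuous.intervalIntegrable (by fun_prop) _ _)
    _ = ∑ j ∈ Finset.range N,
          2*(π/4 * (aE j j k - aF j j k)) := by
        refine Finset.sum_congr rfl fun j _ => ?_
        rw [intervalIntegral.integral_const_mul, G j j k hk]
    _ = -(π/2) * ∑ j ∈ Finset.range N, aF j j k := by
        rw [Finset.mul_sum]
        exact Finset.sum_congr rfl fun j _ => by rw [he j]; ring

lemma eps_sum (N k : ℕ) (hk : 1 ≤ k) :
    ∑ j ∈ Finset.range N, aF j j k = eps N k := by
  unfold aF eps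
  rw [sum_ite_unique N (fun j => j + j + 1 = k) ((k-1)/2) (by omega)]
  refine if_congr ?_ rfl rfl
  rw [Nat.odd_iff]
  omega

lemma double_int (N k l : ℕ) (hk : 1 ≤ k) (hl : 1 ≤ l) :
    (∫ x in (0:ℝ)..π, ∫ y in (0:ℝ)..π,
        (K N x y)^2 * Real.cos ((k:ℝ)*x) * Real.cos ((l:ℝ)*y))
      = π^2/4 * ∑ j ∈ Finset.range N, ∑ i ∈ Finset.range N,
          (aE j i k - aF j i k) * (aE j i l - aF j i l) := by
  set s : ℕ → ℝ → ℝ := fun j x => Real.sin ((2*(j:ℝ)+1)/2 * x) with hs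
  have expand : ∀ x y : ℝ, (K N x y)^2 * Real.cos ((k:ℝ)*x) * Real.cos ((l:ℝ)*y)
      = ∑ j ∈ Finset.range N, ∑ i ∈ Finset.range N,
          (s j x * s i x * Real.cos ((k:ℝ)*x)) * (4 * (s j y * s i y * Real.cos ((l:ℝ)*y))) := by
    intro x y
    have h0 : (K N x y)^2 * Real.cos ((k:ℝ)*x) * Real.cos ((l:ℝ)*y)
        = 4 * Real.cos ((k:ℝ)*x) * Real.cos ((l:ℝ)*y) *
          ((∑ j ∈ Finset.range N, s j x * s j y) * (∑ j ∈ Finset.range N, s j x * s j y)) := by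
      rw [K]; ring
    rw [h0, Finset.sum_mul_sum, Finset.mul_sum]
    refine Finset.sum_congr rfl fun j _ => ?_
    rw [Finset.mul_sum]
    exact Finset.sum_congr rfl fun i _ => by ring
  have inner : ∀ x : ℝ, (∫ y in (0:ℝ)..π,
      (K N x y)^2 * Real.cos ((k:ℝ)*x) * Real.cos ((l:ℝ)*y))
      = ∑ j ∈ Finset.range N, ∑ i ∈ Finset.range N,
          (s j x * s i x * Real.cos ((k:ℝ)*x)) * (4 * (π/4 * (aE j i l - aF j i l))) := by
    intro x
    calc (∫ y in (0:ℝ)..π, (K N x y)^2 * Real.cos ((k:ℝ)*x) * Real.cos ((l:ℝ)*y))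
        = ∫ y in (0:ℝ)..π, ∑ j ∈ Finset.range N, ∑ i ∈ Finset.range N,
            (s j x * s i x * Real.cos ((k:ℝ)*x)) * (4 * (s j y * s i y * Real.cos ((l:ℝ)*y))) :=
          intervalIntegral.integral_congr fun y _ => expand x y
      _ = ∑ j ∈ Finset.range N, ∫ y in (0:ℝ)..π, ∑ i ∈ Finset.range N,
            (s j x * s i x * Real.cos ((k:ℝ)*x)) * (4 * (s j y * s i y * Real.cos ((l:ℝ)*y))) :=
          intervalIntegral.integral_finset_sum
            (fun j _ => Continuous.intervalIntegrable (by fun_prop) _ _)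
      _ = ∑ j ∈ Finset.range N, ∑ i ∈ Finset.range N, ∫ y in (0:ℝ)..π,
            (s j x * s i x * Real.cos ((k:ℝ)*x)) * (4 * (s j y * s i y * Real.cos ((l:ℝ)*y))) :=
          Finset.sum_congr rfl fun j _ => intervalIntegral.integral_finset_sum
            (fun i _ => Continuous.intervalIntegrable (by fun_prop) _ _)
      _ = ∑ j ∈ Finset.range N, ∑ i ∈ Finset.range N,
            (s j x * s i x * Real.cos ((k:ℝ)*x)) * (4 * (π/4 * (aE j i l - aF j i l))) := by
          refine Finset.sum_congr rfl fun j _ => Finset.sum_congr rfl fun i _ => ?_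
          rw [intervalIntegral.integral_const_mul, intervalIntegral.integral_const_mul,
            G j i l hl]
  calc (∫ x in (0:ℝ)..π, ∫ y in (0:ℝ)..π,
        (K N x y)^2 * Real.cos ((k:ℝ)*x) * Real.cos ((l:ℝ)*y))
      = ∫ x in (0:ℝ)..π, ∑ j ∈ Finset.range N, ∑ i ∈ Finset.range N,
          (s j x * s i x * Real.cos ((k:ℝ)*x)) * (4 * (π/4 * (aE j i l - aF j i l))) :=
        intervalIntegral.integral_congr fun x _ => inner x
    _ = ∑ j ∈ Finset.range N, ∫ x in (0:ℝ)..π, ∑ i ∈ Finset.range N,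
          (s j x * s i x * Real.cos ((k:ℝ)*x)) * (4 * (π/4 * (aE j i l - aF j i l))) :=
        intervalIntegral.integral_finset_sum
          (fun j _ => Continuous.intervalIntegrable (by fun_prop) _ _)
    _ = ∑ j ∈ Finset.range N, ∑ i ∈ Finset.range N, ∫ x in (0:ℝ)..π,
          (s j x * s i x * Real.cos ((k:ℝ)*x)) * (4 * (π/4 * (aE j i l - aF j i l))) :=
        Finset.sum_congr rfl fun j _ => intervalIntegral.integral_finset_sum
          (fun i _ => Continuous.intervalIntegrable (by fun_prop) _ _)
    _ = ∑ j ∈ Finset.range N, ∑ i ∈ Finset.range N,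
          (π/4 * (aE j i k - aF j i k)) * (4 * (π/4 * (aE j i l - aF j i l))) := by
        refine Finset.sum_congr rfl fun j _ => Finset.sum_congr rfl fun i _ => ?_
        rw [intervalIntegral.integral_mul_const, G j i k hk]
    _ = π^2/4 * ∑ j ∈ Finset.range N, ∑ i ∈ Finset.range N,
          (aE j i k - aF j i k) * (aE j i l - aF j i l) := by
        rw [Finset.mul_sum]
        refine Finset.sum_congr rfl fun j _ => ?_
        rw [Finset.mul_sum]
        exact Finset.sum_congr rfl fun i _ => by ring

end KernelAux

open KernelAux

/-- Integral identities for the `SO(2N+1)` kernel: for integers `k, ℓ ≥ 1`,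
`(1/π) ∫₀^π K(x,x) cos(kx) dx = −ε(k)/2`;
if `k = ℓ` then `(1/π²) ∫₀^π ∫₀^π K(x,y)² cos(kx) cos(ℓy) dx dy = (2N − k)⁺/4`;
and if `k ≠ ℓ` then this double integral equals `−ε(k+ℓ)/2`. -/
theorem kernel_integrals_SO_odd (N : ℕ) (hN : 1 ≤ N) :
    ∀ k l : ℕ, 1 ≤ k → 1 ≤ l →
      ((1 / Real.pi) * ∫ x in (0:ℝ)..Real.pi, K N x x * Real.cos ((k : ℝ) * x)
          = -(eps N k) / 2) ∧
      (k = l →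
        (1 / Real.pi ^ 2) * ∫ x in (0:ℝ)..Real.pi, ∫ y in (0:ℝ)..Real.pi,
            (K N x y) ^ 2 * Real.cos ((k : ℝ) * x) * Real.cos ((l : ℝ) * y)
          = max (2 * (N : ℝ) - (k : ℝ)) 0 / 4) ∧
      (k ≠ l →
        (1 / Real.pi ^ 2) * ∫ x in (0:ℝ)..Real.pi, ∫ y in (0:ℝ)..Real.pi,
            (K N x y) ^ 2 * Real.cos ((k : ℝ) * x) * Real.cos ((l : ℝ) * y)
          = -(eps N (k + l)) / 2) := by
  intro k l hk hl
  have hπ : (π : ℝ) ≠ 0 := Real.pi_ne_zero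
  refine ⟨?_, ?_, ?_⟩
  · rw [single_int N k hk, eps_sum N k hk]
    field_simp
  · intro hkl
    subst hkl
    rw [double_int N k k hk hk, comb_diag N k hk]
    have hmax : ((2*N - k : ℕ) : ℝ) = max (2 * (N : ℝ) - (k : ℝ)) 0 := by
      rcases le_total k (2*N) with h | h
      · have h' : (k:ℝ) ≤ 2*(N:ℝ) := by exact_mod_cast h
        rw [max_eq_left (by linarith), Nat.cast_sub h]
        push_cast; ring
      · have h' : 2*(N:ℝ) ≤ (k:ℝ) := by exact_mod_cast h
        rw [max_eq_right (by linarith), Nat.sub_eq_zero_of_le h]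
        simp
    rw [hmax]
    field_simp
  · intro hkl
    rw [double_int N k l hk hl, comb_off N k l hk hl hkl]
    have heps : eps N (k + l) = if ((k+l) % 2 = 1 ∧ k + l + 1 ≤ 2*N) then (1:ℝ) else 0 := by
      unfold eps
      refine if_congr ?_ rfl rfl
      rw [Nat.odd_iff]
      omega
    rw [heps]
    split_ifs <;> first | (field_simp; ring) | field_simp
end
end

section
/- Let N ≥ 1 and define K(x,y) = 2 Σ_{j=0}^{N−1} sin(((2j+1)/2)x)·sin(((2j+1)/2)y), and for integers a, b, c set α(a,b,c) = (min{a,N} + min{b,N} − c)⁺ with x⁺ = max{x,0}. Then for all integers k, ℓ ≥ 1: (1/π³) ∫₀^π ∫₀^π ∫₀^π K(x,y) K(y,z) K(z,x) cos(kx) cos(ℓy) cos((k+ℓ)z) dx dy dz = (N − k − ℓ)⁺/4 + (α(k+ℓ, ℓ, k+ℓ) + α(k+ℓ, k, k+ℓ))/8; moreover (1/π⁴) ∫₀^π ∫₀^π ∫₀^π ∫₀^π K(x,y) K(y,z) K(z,w) K(w,x) cos(kx) cos(ky) cos(kz) cos(kw) dx dy dz dw = (N − k)⁺/4 + (2N −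 k)⁺/16. -/
noncomputable section

/-- `α(a,b,c) = (min{a,N} + min{b,N} − c)⁺`. -/
def alph (N : ℕ) (a b c : ℤ) : ℝ :=
  ((max (min a (N : ℤ) + min b (N : ℤ) - c) 0 : ℤ) : ℝ)

namespace SOoddAux

open Real intervalIntegral Finset

/-- basic sine building block -/
def sf (i : ℕ) (x : ℝ) : ℝ := Real.sin ((2 * (i : ℝ) + 1) / 2 * x)

/-- discrete kernel coefficient -/
def Aq (i j n : ℕ) : ℝ :=
  (if (i = j + n ∨ j = i + n) then 1 else 0) - (if i + j + 1 = n then 1 else 0)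

lemma Aq_comm (i j n : ℕ) : Aq i j n = Aq j i n := by
  unfold Aq
  congr 1
  · congr 1; simp [or_comm]
  · congr 1; simp [Nat.add_comm i j]

lemma intcos (m : ℤ) : ∫ x in (0:ℝ)..Real.pi, Real.cos ((m:ℝ) * x) = if m = 0 then Real.pi else 0 := by
  by_cases h : m = 0
  · simp [h]
  · have hm : (m : ℝ) ≠ 0 := by exact_mod_cast h
    have key : ∀ x ∈ Set.uIcc (0:ℝ) Real.pi, HasDerivAt (fun t => Real.sin ((m:ℝ) * t) / m) (Real.cos ((m:ℝ)*x)) x := by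
      intro x _
      have h1 : HasDerivAt (fun t : ℝ => (m:ℝ) * t) ((m:ℝ)) x := by
        simpa using (hasDerivAt_id x).const_mul (m:ℝ)
      have h2 : HasDerivAt (fun t => Real.sin ((m:ℝ) * t)) (Real.cos ((m:ℝ)*x) * (m:ℝ)) x :=
        (Real.hasDerivAt_sin ((m:ℝ)*x)).comp x h1
      have h3 := h2.div_const (m:ℝ)
      simpa [mul_div_assoc, mul_div_cancel_right₀ _ hm] using h3
    rw [intervalIntegral.integral_eq_sub_of_hasDerivAt key (by apply Continuous.intervalIntegrable; fun_prop)]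
    rw [if_neg h]
    simp [Real.sin_int_mul_pi]

lemma sin_mul_sin (p q : ℝ) : Real.sin p * Real.sin q = (Real.cos (p - q) - Real.cos (p + q)) / 2 := by
  rw [Real.cos_sub, Real.cos_add]; ring

lemma cos_mul_cos (p q : ℝ) : Real.cos p * Real.cos q = (Real.cos (p - q) + Real.cos (p + q)) / 2 := by
  rw [Real.cos_sub, Real.cos_add]; ring

lemma Jval (i j n : ℕ) (hn : 1 ≤ n) :
    ∫ x in (0:ℝ)..Real.pi, sf i x * sf j x * Real.cos ((n:ℝ) * x)
      = Real.pi / 4 * Aq i j n := by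
  have hpt : ∀ x : ℝ, sf i x * sf j x * Real.cos ((n:ℝ) * x)
      = (Real.cos ((((i:ℤ) - j - n : ℤ):ℝ) * x) + Real.cos ((((i:ℤ) - j + n : ℤ):ℝ) * x)
        - Real.cos ((((i:ℤ) + j + 1 - n : ℤ):ℝ) * x) - Real.cos ((((i:ℤ) + j + 1 + n : ℤ):ℝ) * x)) / 4 := by
    intro x
    unfold sf
    have E1 : Real.sin ((2 * (i:ℝ) + 1) / 2 * x) * Real.sin ((2 * (j:ℝ) + 1) / 2 * x)
        = (Real.cos (((i:ℝ) - j) * x) - Real.cos (((i:ℝ) + j + 1) * x)) / 2 := by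
      rw [sin_mul_sin,
        show (2 * (i:ℝ) + 1) / 2 * x - (2 * (j:ℝ) + 1) / 2 * x = ((i:ℝ) - j) * x by ring,
        show (2 * (i:ℝ) + 1) / 2 * x + (2 * (j:ℝ) + 1) / 2 * x = ((i:ℝ) + j + 1) * x by ring]
    have E2 : Real.cos (((i:ℝ) - j) * x) * Real.cos ((n:ℝ) * x)
        = (Real.cos ((((i:ℤ) - j - n : ℤ):ℝ) * x) + Real.cos ((((i:ℤ) - j + n : ℤ):ℝ) * x)) / 2 := by
      rw [cos_mul_cos,
        show ((i:ℝ) - j) * x - (n:ℝ) * x = (((i:ℤ) - j - n : ℤ):ℝ) * x by push_cast; ring,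
        show ((i:ℝ) - j) * x + (n:ℝ) * x = (((i:ℤ) - j + n : ℤ):ℝ) * x by push_cast; ring]
    have E3 : Real.cos (((i:ℝ) + j + 1) * x) * Real.cos ((n:ℝ) * x)
        = (Real.cos ((((i:ℤ) + j + 1 - n : ℤ):ℝ) * x) + Real.cos ((((i:ℤ) + j + 1 + n : ℤ):ℝ) * x)) / 2 := by
      rw [cos_mul_cos,
        show ((i:ℝ) + j + 1) * x - (n:ℝ) * x = (((i:ℤ) + j + 1 - n : ℤ):ℝ) * x by push_cast; ring,
        show ((i:ℝ) + j + 1) * x + (n:ℝ) * x = (((i:ℤ) + j + 1 + n : ℤ):ℝ) * x by push_cast; ring]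
    rw [E1]
    linear_combination (1/2 : ℝ) * E2 - (1/2 : ℝ) * E3
  rw [intervalIntegral.integral_congr (fun x _ => hpt x)]
  have ii : ∀ m : ℤ, IntervalIntegrable (fun x => Real.cos ((m:ℝ) * x)) MeasureTheory.volume (0:ℝ) Real.pi := by
    intro m; apply Continuous.intervalIntegrable; fun_prop
  rw [intervalIntegral.integral_div]
  rw [intervalIntegral.integral_sub (((ii _).add (ii _)).sub (ii _)) (ii _),
      intervalIntegral.integral_sub ((ii _).add (ii _)) (ii _),
      intervalIntegral.integral_add (ii _) (ii _)]
  rw [intcos, intcos, intcos, intcos]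
  unfold Aq
  split_ifs <;> (try (exfalso; omega)) <;> ring

-- combinatorial part

lemma Aq_expand (i n : ℕ) (hn : 1 ≤ n) (m : ℕ) :
    Aq i m n = (if m = i + n then 1 else 0) + (if n ≤ i ∧ m = i - n then 1 else 0)
      - (if i < n ∧ m = n - 1 - i then 1 else 0) := by
  unfold Aq
  split_ifs <;> (try (exfalso; omega)) <;> ring

lemma sum_if_eq (N : ℕ) (c : ℕ) (P : Prop) [Decidable P] (f : ℕ → ℝ) :
    (∑ m ∈ Finset.range N, (if P ∧ m = c then 1 else 0) * f m)
      = if P ∧ c < N then f c else 0 := by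
  have : ∀ m, (if P ∧ m = c then (1:ℝ) else 0) * f m = if m = c then (if P then f m else 0) else 0 := by
    intro m; split_ifs <;> simp_all
  rw [Finset.sum_congr rfl fun m _ => this m, Finset.sum_ite_eq' (Finset.range N) c]
  by_cases hc : c < N <;> by_cases hP : P <;> simp [hc, hP, Finset.mem_range]

lemma sum_if_eq0 (N : ℕ) (c : ℕ) (f : ℕ → ℝ) :
    (∑ m ∈ Finset.range N, (if m = c then 1 else 0) * f m)
      = if c < N then f c else 0 := by
  have : ∀ m, (if m = c then (1:ℝ) else 0) * f m = if m = c then f m else 0 := by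
    intro m; split_ifs <;> simp_all
  rw [Finset.sum_congr rfl fun m _ => this m, Finset.sum_ite_eq' (Finset.range N) c]
  by_cases hc : c < N <;> simp [hc, Finset.mem_range]

lemma sumA (N n : ℕ) (hn : 1 ≤ n) (i : ℕ) (f : ℕ → ℝ) :
    ∑ m ∈ Finset.range N, Aq i m n * f m
      = (if i + n < N then f (i + n) else 0)
        + (if n ≤ i ∧ i - n < N then f (i - n) else 0)
        - (if i < n ∧ n - 1 - i < N then f (n - 1 - i) else 0) := by
  have expand : ∀ m, Aq i m n * f m
      = (if m = i + n then 1 else 0) * f m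
        + (if (n ≤ i) ∧ m = i - n then 1 else 0) * f m
        - (if (i < n) ∧ m = n - 1 - i then 1 else 0) * f m := by
    intro m
    rw [Aq_expand i n hn m]; ring
  rw [Finset.sum_congr rfl fun m _ => expand m]
  rw [Finset.sum_sub_distrib, Finset.sum_add_distrib, sum_if_eq0, sum_if_eq, sum_if_eq]

lemma count_sum (N a b : ℕ) (C : ℕ → Prop) [DecidablePred C]
    (h : ∀ i, i < N → (C i ↔ (a ≤ i ∧ i < b))) :
    ∑ i ∈ Finset.range N, (if C i then (1:ℝ) else 0) = ((min b N - a : ℕ) : ℝ) := by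
  rw [Finset.sum_boole]
  congr 1
  have : Finset.filter C (Finset.range N) = Finset.Ico a (min b N) := by
    ext i
    simp only [Finset.mem_filter, Finset.mem_range, Finset.mem_Ico]
    constructor
    · rintro ⟨h1, h2⟩
      have := (h i h1).mp h2
      omega
    · rintro ⟨h1, h2⟩
      have hiN : i < N := by omega
      exact ⟨hiN, (h i hiN).mpr (by omega)⟩
  rw [this, Nat.card_Ico]

lemma sum_ite_const (N : ℕ) (G : Prop) [Decidable G] (g : ℕ → ℝ) :
    ∑ j ∈ Finset.range N, (if G then g j else 0) = if G then ∑ j ∈ Finset.range N, g j else 0 := by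
  split_ifs <;> simp

set_option maxHeartbeats 3200000 in
lemma point3 (N k l i : ℕ) (hk : 1 ≤ k) (hl : 1 ≤ l) (hi : i < N) :
    ∑ j ∈ Finset.range N, ∑ m ∈ Finset.range N, Aq i m k * Aq i j l * Aq j m (k + l)
      = (if k ≤ i ∧ i - k < N ∧ i + l < N then 1 else 0)
      + (if i < k ∧ k - 1 - i < N ∧ i + l < N then 1 else 0)
      + (if l ≤ i ∧ i - l < N ∧ i + k < N then 1 else 0)
      + (if i < l ∧ l - 1 - i < N ∧ i + k < N then 1 else 0) := by
  have step1 : ∀ j, ∑ m ∈ Finset.range N, Aq i m k * Aq i j l * Aq j m (k + l)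
      = (if i + k < N then Aq i j l * Aq j (i + k) (k + l) else 0)
        + (if k ≤ i ∧ i - k < N then Aq i j l * Aq j (i - k) (k + l) else 0)
        - (if i < k ∧ k - 1 - i < N then Aq i j l * Aq j (k - 1 - i) (k + l) else 0) := by
    intro j
    have h1 : ∀ m, Aq i m k * Aq i j l * Aq j m (k + l)
        = Aq i m k * (Aq i j l * Aq j m (k + l)) := fun m => by ring
    rw [Finset.sum_congr rfl fun m _ => h1 m,
        sumA N k hk i (fun m => Aq i j l * Aq j m (k + l))]
  rw [Finset.sum_congr rfl fun j _ => step1 j]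
  rw [Finset.sum_sub_distrib, Finset.sum_add_distrib, sum_ite_const, sum_ite_const, sum_ite_const]
  rw [sumA N l hl i (fun j => Aq j (i + k) (k + l)),
      sumA N l hl i (fun j => Aq j (i - k) (k + l)),
      sumA N l hl i (fun j => Aq j (k - 1 - i) (k + l))]
  split_ifs <;> (try (exfalso; omega)) <;> (try norm_num) <;>
    (simp only [Aq]; split_ifs <;> (try (exfalso; omega)) <;> norm_num)

lemma sum3 (N k l : ℕ) (hk : 1 ≤ k) (hl : 1 ≤ l) :
    ∑ i ∈ Finset.range N, ∑ j ∈ Finset.range N, ∑ m ∈ Finset.range N,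
        Aq i m k * Aq i j l * Aq j m (k + l)
      = 2 * max ((N:ℝ) - k - l) 0
        + ((max (min ((k:ℤ) + l) (N:ℤ) + min (l:ℤ) (N:ℤ) - ((k:ℤ) + l)) 0 : ℤ) : ℝ)
        + ((max (min ((k:ℤ) + l) (N:ℤ) + min (k:ℤ) (N:ℤ) - ((k:ℤ) + l)) 0 : ℤ) : ℝ) := by
  rw [Finset.sum_congr rfl fun i hi => point3 N k l i hk hl (Finset.mem_range.mp hi)]
  rw [Finset.sum_add_distrib, Finset.sum_add_distrib, Finset.sum_add_distrib]
  rw [count_sum N k (N - l) _ (fun i hi => by omega),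
      count_sum N (k - N) (min k (N - l)) _ (fun i hi => by omega),
      count_sum N l (N - k) _ (fun i hi => by omega),
      count_sum N (l - N) (min l (N - k)) _ (fun i hi => by omega)]
  rw [show 2 * max ((N:ℝ) - k - l) 0
        + ((max (min ((k:ℤ) + l) (N:ℤ) + min (l:ℤ) (N:ℤ) - ((k:ℤ) + l)) 0 : ℤ) : ℝ)
        + ((max (min ((k:ℤ) + l) (N:ℤ) + min (k:ℤ) (N:ℤ) - ((k:ℤ) + l)) 0 : ℤ) : ℝ)
      = ((2 * max ((N:ℤ) - k - l) 0
          + max (min ((k:ℤ) + l) (N:ℤ) + min (l:ℤ) (N:ℤ) - ((k:ℤ) + l)) 0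
          + max (min ((k:ℤ) + l) (N:ℤ) + min (k:ℤ) (N:ℤ) - ((k:ℤ) + l)) 0 : ℤ) : ℝ) by
    push_cast; ring]
  exact_mod_cast congrArg (fun z : ℤ => (z : ℝ)) (show
    ((min (N - l) N - k : ℕ) : ℤ) + ((min (min k (N - l)) N - (k - N) : ℕ) : ℤ)
      + ((min (N - k) N - l : ℕ) : ℤ) + ((min (min l (N - k)) N - (l - N) : ℕ) : ℤ)
    = 2 * max ((N:ℤ) - k - l) 0
        + max (min ((k:ℤ) + l) (N:ℤ) + min (l:ℤ) (N:ℤ) - ((k:ℤ) + l)) 0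
        + max (min ((k:ℤ) + l) (N:ℤ) + min (k:ℤ) (N:ℤ) - ((k:ℤ) + l)) 0 by omega)

lemma if_congr_zero {G : Prop} [Decidable G] {a b : ℝ} (h : G → a = b) :
    (if G then a else 0) = (if G then b else 0) := by
  split_ifs with hg
  · exact h hg
  · rfl

/-- `B(i,m) = Σ_j A(i,j,k) A(j,m,k)` -/
def Bq (N k i m : ℕ) : ℝ := ∑ j ∈ Finset.range N, Aq i j k * Aq j m k

lemma Bq_eq (N k i m : ℕ) (hk : 1 ≤ k) :
    Bq N k i m = (if i + k < N then Aq (i + k) m k else 0)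
      + (if k ≤ i ∧ i - k < N then Aq (i - k) m k else 0)
      - (if i < k ∧ k - 1 - i < N then Aq (k - 1 - i) m k else 0) :=
  sumA N k hk i (fun j => Aq j m k)

lemma B0 (N k i : ℕ) (hk : 1 ≤ k) :
    Bq N k i i = (if i + k < N then (1:ℝ) else 0) + (if k ≤ i ∧ i - k < N then 1 else 0)
      + (if i < k ∧ k - 1 - i < N then 1 else 0) := by
  rw [Bq_eq N k i i hk]
  split_ifs <;> (try (exfalso; omega)) <;> (try norm_num) <;>
    (simp only [Aq]; split_ifs <;> (try (exfalso; omega)) <;> (try norm_num) <;> simp_all)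

lemma B1 (N k i : ℕ) (hk : 1 ≤ k) :
    Bq N k i (i + 2 * k) = if i + k < N then (1:ℝ) else 0 := by
  rw [Bq_eq N k i (i + 2 * k) hk]
  split_ifs <;> (try (exfalso; omega)) <;> (try norm_num) <;>
    (simp only [Aq]; split_ifs <;> (try (exfalso; omega)) <;> (try norm_num) <;> simp_all)

lemma B2 (N k i : ℕ) (hk : 1 ≤ k) (h2 : 2 * k ≤ i) :
    Bq N k i (i - 2 * k) = if k ≤ i ∧ i - k < N then (1:ℝ) else 0 := by
  rw [Bq_eq N k i (i - 2 * k) hk]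
  split_ifs <;> (try (exfalso; omega)) <;> (try norm_num) <;>
    (simp only [Aq]; split_ifs <;> (try (exfalso; omega)) <;> (try norm_num) <;> simp_all)

lemma B3 (N k i : ℕ) (hk : 1 ≤ k) (h2 : i < 2 * k) :
    Bq N k i (2 * k - 1 - i) = 0 - (if k ≤ i ∧ i - k < N then (1:ℝ) else 0)
      - (if i < k ∧ k - 1 - i < N then 1 else 0) := by
  rw [Bq_eq N k i (2 * k - 1 - i) hk]
  split_ifs <;> (try (exfalso; omega)) <;> (try norm_num) <;>
    (simp only [Aq]; split_ifs <;> (try (exfalso; omega)) <;> (try norm_num) <;> simp_all)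

set_option maxHeartbeats 3200000 in
lemma point4 (N k i : ℕ) (hk : 1 ≤ k) (hi : i < N) :
    ∑ m ∈ Finset.range N, Bq N k i m * Bq N k i m
      = (if i + 2 * k < N then (1:ℝ) else 0) + (if i + k < N then 1 else 0)
        + 2 * (if k ≤ i ∧ i + k < N then 1 else 0) + (if k ≤ i then 1 else 0)
        + (if 2 * k ≤ i then 1 else 0)
        + 2 * (if i < k ∧ k - 1 - i < N ∧ i + k < N then 1 else 0)
        + (if k ≤ i ∧ i < 2 * k ∧ 2 * k - 1 - i < N then 1 else 0)
        + (if i < k ∧ 2 * k - 1 - i < N then 1 else 0)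
        + (if i < k ∧ k - 1 - i < N then 1 else 0) := by
  have hsplit : ∀ m, Bq N k i m * Bq N k i m
      = (if i + k < N then Aq (i + k) m k * Bq N k i m else 0)
        + (if k ≤ i ∧ i - k < N then Aq (i - k) m k * Bq N k i m else 0)
        - (if i < k ∧ k - 1 - i < N then Aq (k - 1 - i) m k * Bq N k i m else 0) := by
    intro m
    calc Bq N k i m * Bq N k i m
        = ((if i + k < N then Aq (i + k) m k else 0)
            + (if k ≤ i ∧ i - k < N then Aq (i - k) m k else 0)
            - (if i < k ∧ k - 1 - i < N then Aq (k - 1 - i) m k else 0)) * Bq N k i m := by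
          rw [← Bq_eq N k i m hk]
      _ = _ := by split_ifs <;> ring
  have T1 : i + k < N → (∑ m ∈ Finset.range N, Aq (i + k) m k * Bq N k i m)
      = (if i + 2 * k < N then (if i + k < N then (1:ℝ) else 0) else 0)
        + ((if i + k < N then (1:ℝ) else 0) + (if k ≤ i ∧ i - k < N then 1 else 0)
          + (if i < k ∧ k - 1 - i < N then 1 else 0)) := by
    intro h1
    rw [sumA N k hk (i + k) (Bq N k i)]
    rw [show i + k + k = i + 2 * k from by omega]
    rw [show i + k - k = i from by omega]
    rw [if_pos (show k ≤ i + k ∧ i < N from by omega)]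
    rw [if_neg (show ¬(i + k < k ∧ k - 1 - (i + k) < N) from by omega)]
    rw [B1 N k i hk, B0 N k i hk]
    ring
  have T2 : (k ≤ i ∧ i - k < N) → (∑ m ∈ Finset.range N, Aq (i - k) m k * Bq N k i m)
      = ((if i + k < N then (1:ℝ) else 0) + (if k ≤ i ∧ i - k < N then 1 else 0)
          + (if i < k ∧ k - 1 - i < N then 1 else 0))
        + (if 2 * k ≤ i ∧ i - 2 * k < N then (if k ≤ i ∧ i - k < N then (1:ℝ) else 0) else 0)
        - (if i < 2 * k ∧ 2 * k - 1 - i < N then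
            (0 - (if k ≤ i ∧ i - k < N then (1:ℝ) else 0)
              - (if i < k ∧ k - 1 - i < N then 1 else 0)) else 0) := by
    intro h2
    rw [sumA N k hk (i - k) (Bq N k i)]
    rw [show i - k + k = i from by omega]
    rw [show i - k - k = i - 2 * k from by omega]
    rw [show k - 1 - (i - k) = 2 * k - 1 - i from by omega]
    rw [if_pos (show i < N from hi)]
    simp only [show (k ≤ i - k ∧ i - 2 * k < N) ↔ (2 * k ≤ i ∧ i - 2 * k < N) from by omega,
      show (i - k < k ∧ 2 * k - 1 - i < N) ↔ (i < 2 * k ∧ 2 * k - 1 - i < N) from by omega]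
    rw [B0 N k i hk]
    rw [if_congr_zero (fun h' : 2 * k ≤ i ∧ i - 2 * k < N => B2 N k i hk h'.1)]
    rw [if_congr_zero (fun h' : i < 2 * k ∧ 2 * k - 1 - i < N => B3 N k i hk h'.1)]
  have T3 : (i < k ∧ k - 1 - i < N) → (∑ m ∈ Finset.range N, Aq (k - 1 - i) m k * Bq N k i m)
      = (if 2 * k - 1 - i < N then
            (0 - (if k ≤ i ∧ i - k < N then (1:ℝ) else 0)
              - (if i < k ∧ k - 1 - i < N then 1 else 0)) else 0)
        - ((if i + k < N then (1:ℝ) else 0) + (if k ≤ i ∧ i - k < N then 1 else 0)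
          + (if i < k ∧ k - 1 - i < N then 1 else 0)) := by
    intro h3
    rw [sumA N k hk (k - 1 - i) (Bq N k i)]
    rw [show k - 1 - i + k = 2 * k - 1 - i from by omega]
    rw [show k - 1 - (k - 1 - i) = i from by omega]
    rw [if_neg (show ¬(k ≤ k - 1 - i ∧ k - 1 - i - k < N) from by omega)]
    rw [if_pos (show k - 1 - i < k ∧ i < N from by omega)]
    rw [if_congr_zero (fun h' : 2 * k - 1 - i < N => B3 N k i hk (by omega))]
    rw [B0 N k i hk]
    ring
  rw [Finset.sum_congr rfl fun m _ => hsplit m]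
  rw [Finset.sum_sub_distrib, Finset.sum_add_distrib, sum_ite_const, sum_ite_const, sum_ite_const]
  rw [if_congr_zero T1, if_congr_zero T2, if_congr_zero T3]
  split_ifs <;> (try (exfalso; omega)) <;> norm_num

lemma reorg4 (N k : ℕ) :
    ∑ i ∈ Finset.range N, ∑ j ∈ Finset.range N, ∑ m ∈ Finset.range N, ∑ p ∈ Finset.range N,
        Aq i j k * Aq j m k * Aq m p k * Aq p i k
      = ∑ i ∈ Finset.range N, ∑ m ∈ Finset.range N, Bq N k i m * Bq N k i m := by
  refine Finset.sum_congr rfl fun i _ => ?_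
  have h1 : ∀ j m, (∑ p ∈ Finset.range N, Aq i j k * Aq j m k * Aq m p k * Aq p i k)
      = (Aq i j k * Aq j m k) * ∑ p ∈ Finset.range N, Aq i p k * Aq p m k := by
    intro j m
    rw [Finset.mul_sum]
    refine Finset.sum_congr rfl fun p _ => ?_
    rw [Aq_comm i p, Aq_comm p m]
    ring
  rw [Finset.sum_congr rfl fun j _ => Finset.sum_congr rfl fun m _ => h1 j m]
  rw [Finset.sum_comm]
  refine Finset.sum_congr rfl fun m _ => ?_
  rw [← Finset.sum_mul]
  rfl

lemma sum4 (N k : ℕ) (hk : 1 ≤ k) :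
    ∑ i ∈ Finset.range N, ∑ j ∈ Finset.range N, ∑ m ∈ Finset.range N, ∑ p ∈ Finset.range N,
        Aq i j k * Aq j m k * Aq m p k * Aq p i k
      = 4 * max ((N:ℝ) - k) 0 + ((max (2 * (N:ℤ) - k) 0 : ℤ) : ℝ) := by
  rw [reorg4 N k]
  rw [Finset.sum_congr rfl fun i hi => point4 N k i hk (Finset.mem_range.mp hi)]
  simp only [Finset.sum_add_distrib, ← Finset.mul_sum]
  rw [count_sum N 0 (N - 2 * k) _ (fun i hi => by omega),
      count_sum N 0 (N - k) _ (fun i hi => by omega),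
      count_sum N k (N - k) _ (fun i hi => by omega),
      count_sum N k N _ (fun i hi => by omega),
      count_sum N (2 * k) N _ (fun i hi => by omega),
      count_sum N (k - N) (min k (N - k)) _ (fun i hi => by omega),
      count_sum N (max k (2 * k - N)) (2 * k) _ (fun i hi => by omega),
      count_sum N (2 * k - N) k _ (fun i hi => by omega),
      count_sum N (k - N) k _ (fun i hi => by omega)]
  rw [show 4 * max ((N:ℝ) - k) 0 + ((max (2 * (N:ℤ) - k) 0 : ℤ) : ℝ)
      = ((4 * max ((N:ℤ) - k) 0 + max (2 * (N:ℤ) - k) 0 : ℤ) : ℝ) from by push_cast; ring]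
  exact_mod_cast congrArg (fun z : ℤ => (z : ℝ)) (show
    ((min (N - 2 * k) N - 0 : ℕ) : ℤ) + ((min (N - k) N - 0 : ℕ) : ℤ)
      + 2 * ((min (N - k) N - k : ℕ) : ℤ) + ((min N N - k : ℕ) : ℤ)
      + ((min N N - 2 * k : ℕ) : ℤ)
      + 2 * ((min (min k (N - k)) N - (k - N) : ℕ) : ℤ)
      + ((min (2 * k) N - max k (2 * k - N) : ℕ) : ℤ)
      + ((min k N - (2 * k - N) : ℕ) : ℤ) + ((min k N - (k - N) : ℕ) : ℤ)
    = 4 * max ((N:ℤ) - k) 0 + max (2 * (N:ℤ) - k) 0 from by omega)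

@[fun_prop]
lemma cont_sf (i : ℕ) : Continuous (sf i) := by
  unfold sf; fun_prop

lemma K_eq (N : ℕ) (x y : ℝ) : K N x y = 2 * ∑ j ∈ Finset.range N, sf j x * sf j y := rfl

lemma intg1 (j m n : ℕ) (c : ℝ) :
    IntervalIntegrable (fun z => c * (sf j z * sf m z * Real.cos ((n:ℝ) * z)))
      MeasureTheory.volume (0:ℝ) Real.pi := by
  apply Continuous.intervalIntegrable; fun_prop

/-- innermost `z` integral -/
lemma step_z (N k l : ℕ) (x y : ℝ) :
    (∫ z in (0:ℝ)..Real.pi, K N x y * K N y z * K N z x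
        * Real.cos ((k:ℝ) * x) * Real.cos ((l:ℝ) * y) * Real.cos (((k+l : ℕ):ℝ) * z))
    = ∑ j ∈ Finset.range N, ∑ m ∈ Finset.range N,
        (K N x y * Real.cos ((k:ℝ) * x) * Real.cos ((l:ℝ) * y) * (4 * sf j y * sf m x))
          * ∫ z in (0:ℝ)..Real.pi, sf j z * sf m z * Real.cos (((k+l : ℕ):ℝ) * z) := by
  have e : ∀ z, (K N y z) * (K N z x)
      = ∑ j ∈ Finset.range N, ∑ m ∈ Finset.range N, (4 * sf j y * sf m x) * (sf j z * sf m z) := by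
    intro z
    rw [K_eq N y z, K_eq N z x]
    calc (2 * ∑ j ∈ Finset.range N, sf j y * sf j z) * (2 * ∑ m ∈ Finset.range N, sf m z * sf m x)
        = 4 * ((∑ j ∈ Finset.range N, sf j y * sf j z) * (∑ m ∈ Finset.range N, sf m z * sf m x)) := by
          ring
      _ = 4 * ∑ j ∈ Finset.range N, ∑ m ∈ Finset.range N, (sf j y * sf j z) * (sf m z * sf m x) := by
          rw [Finset.sum_mul_sum]
      _ = ∑ j ∈ Finset.range N, ∑ m ∈ Finset.range N, (4 * sf j y * sf m x) * (sf j z * sf m z) := by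
          rw [Finset.mul_sum]
          exact Finset.sum_congr rfl fun j _ => by
            rw [Finset.mul_sum]
            exact Finset.sum_congr rfl fun m _ => by ring
  have hpt : ∀ z, K N x y * K N y z * K N z x
        * Real.cos ((k:ℝ) * x) * Real.cos ((l:ℝ) * y) * Real.cos (((k+l : ℕ):ℝ) * z)
      = ∑ j ∈ Finset.range N, ∑ m ∈ Finset.range N,
          (K N x y * Real.cos ((k:ℝ) * x) * Real.cos ((l:ℝ) * y) * (4 * sf j y * sf m x))
            * (sf j z * sf m z * Real.cos (((k+l : ℕ):ℝ) * z)) := by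
    intro z
    calc K N x y * K N y z * K N z x * Real.cos ((k:ℝ) * x) * Real.cos ((l:ℝ) * y)
            * Real.cos (((k+l : ℕ):ℝ) * z)
        = (K N y z * K N z x) * (K N x y * Real.cos ((k:ℝ) * x) * Real.cos ((l:ℝ) * y)
            * Real.cos (((k+l : ℕ):ℝ) * z)) := by ring
      _ = (∑ j ∈ Finset.range N, ∑ m ∈ Finset.range N, (4 * sf j y * sf m x) * (sf j z * sf m z))
            * (K N x y * Real.cos ((k:ℝ) * x) * Real.cos ((l:ℝ) * y)
              * Real.cos (((k+l : ℕ):ℝ) * z)) := by rw [e z]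
      _ = _ := by
          rw [Finset.sum_mul]
          exact Finset.sum_congr rfl fun j _ => by
            rw [Finset.sum_mul]
            exact Finset.sum_congr rfl fun m _ => by ring
  rw [intervalIntegral.integral_congr (fun z _ => hpt z)]
  rw [intervalIntegral.integral_finset_sum (fun j _ => by
    apply Continuous.intervalIntegrable
    apply continuous_finset_sum
    intro m _
    fun_prop)]
  refine Finset.sum_congr rfl fun j _ => ?_
  rw [intervalIntegral.integral_finset_sum (fun m _ => intg1 j m (k+l) _)]
  refine Finset.sum_congr rfl fun m _ => ?_
  rw [intervalIntegral.integral_const_mul]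

/-- middle `y` integral (D stands for the values of inner z-integrals) -/
lemma step_y (N k l : ℕ) (x : ℝ) (D : ℕ → ℕ → ℝ) :
    (∫ y in (0:ℝ)..Real.pi, ∑ j ∈ Finset.range N, ∑ m ∈ Finset.range N,
        (K N x y * Real.cos ((k:ℝ) * x) * Real.cos ((l:ℝ) * y) * (4 * sf j y * sf m x)) * D j m)
    = ∑ j ∈ Finset.range N, ∑ m ∈ Finset.range N, ∑ i ∈ Finset.range N,
        (8 * sf i x * sf m x * Real.cos ((k:ℝ) * x) * D j m)
          * ∫ y in (0:ℝ)..Real.pi, sf i y * sf j y * Real.cos ((l:ℝ) * y) := by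
  have hpt : ∀ y, (∑ j ∈ Finset.range N, ∑ m ∈ Finset.range N,
        (K N x y * Real.cos ((k:ℝ) * x) * Real.cos ((l:ℝ) * y) * (4 * sf j y * sf m x)) * D j m)
      = ∑ j ∈ Finset.range N, ∑ m ∈ Finset.range N, ∑ i ∈ Finset.range N,
          (8 * sf i x * sf m x * Real.cos ((k:ℝ) * x) * D j m)
            * (sf i y * sf j y * Real.cos ((l:ℝ) * y)) := by
    intro y
    refine Finset.sum_congr rfl fun j _ => Finset.sum_congr rfl fun m _ => ?_
    calc (K N x y * Real.cos ((k:ℝ) * x) * Real.cos ((l:ℝ) * y) * (4 * sf j y * sf m x)) * D j m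
        = (∑ i ∈ Finset.range N, sf i x * sf i y)
            * (8 * Real.cos ((k:ℝ) * x) * Real.cos ((l:ℝ) * y) * sf j y * sf m x * D j m) := by
          rw [K_eq]; ring
      _ = ∑ i ∈ Finset.range N, (sf i x * sf i y)
            * (8 * Real.cos ((k:ℝ) * x) * Real.cos ((l:ℝ) * y) * sf j y * sf m x * D j m) := by
          rw [Finset.sum_mul]
      _ = _ := Finset.sum_congr rfl fun i _ => by ring
  rw [intervalIntegral.integral_congr (fun y _ => hpt y)]
  rw [intervalIntegral.integral_finset_sum (fun j _ => by
    apply Continuous.intervalIntegrable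
    apply continuous_finset_sum
    intro m _
    apply continuous_finset_sum
    intro i _
    fun_prop)]
  refine Finset.sum_congr rfl fun j _ => ?_
  rw [intervalIntegral.integral_finset_sum (fun m _ => by
    apply Continuous.intervalIntegrable
    apply continuous_finset_sum
    intro i _
    fun_prop)]
  refine Finset.sum_congr rfl fun m _ => ?_
  rw [intervalIntegral.integral_finset_sum (fun i _ => by
    apply Continuous.intervalIntegrable; fun_prop)]
  refine Finset.sum_congr rfl fun i _ => ?_
  rw [intervalIntegral.integral_const_mul]

/-- generic outermost integral of a triple sum of constants times `sf i x * sf m x * cos(kx)` -/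
lemma step_x (N k : ℕ) (C : ℕ → ℕ → ℕ → ℝ) :
    (∫ x in (0:ℝ)..Real.pi, ∑ j ∈ Finset.range N, ∑ m ∈ Finset.range N, ∑ i ∈ Finset.range N,
        (C i j m) * (sf i x * sf m x * Real.cos ((k:ℝ) * x)))
    = ∑ j ∈ Finset.range N, ∑ m ∈ Finset.range N, ∑ i ∈ Finset.range N,
        (C i j m) * ∫ x in (0:ℝ)..Real.pi, sf i x * sf m x * Real.cos ((k:ℝ) * x) := by
  rw [intervalIntegral.integral_finset_sum (fun j _ => by
    apply Continuous.intervalIntegrable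
    apply continuous_finset_sum
    intro m _
    apply continuous_finset_sum
    intro i _
    fun_prop)]
  refine Finset.sum_congr rfl fun j _ => ?_
  rw [intervalIntegral.integral_finset_sum (fun m _ => by
    apply Continuous.intervalIntegrable
    apply continuous_finset_sum
    intro i _
    fun_prop)]
  refine Finset.sum_congr rfl fun m _ => ?_
  rw [intervalIntegral.integral_finset_sum (fun i _ => by
    apply Continuous.intervalIntegrable; fun_prop)]
  refine Finset.sum_congr rfl fun i _ => ?_
  rw [intervalIntegral.integral_const_mul]

lemma rot3 (N : ℕ) (f : ℕ → ℕ → ℕ → ℝ) :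
    ∑ j ∈ Finset.range N, ∑ m ∈ Finset.range N, ∑ i ∈ Finset.range N, f i j m
      = ∑ i ∈ Finset.range N, ∑ j ∈ Finset.range N, ∑ m ∈ Finset.range N, f i j m := by
  calc ∑ j ∈ Finset.range N, ∑ m ∈ Finset.range N, ∑ i ∈ Finset.range N, f i j m
      = ∑ j ∈ Finset.range N, ∑ i ∈ Finset.range N, ∑ m ∈ Finset.range N, f i j m :=
        Finset.sum_congr rfl fun j _ => Finset.sum_comm
    _ = _ := Finset.sum_comm

lemma triple_reduce (N k l : ℕ) (hk : 1 ≤ k) (hl : 1 ≤ l) :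
    (∫ x in (0:ℝ)..Real.pi, ∫ y in (0:ℝ)..Real.pi, ∫ z in (0:ℝ)..Real.pi,
        K N x y * K N y z * K N z x
          * Real.cos ((k:ℝ) * x) * Real.cos ((l:ℝ) * y) * Real.cos (((k+l : ℕ):ℝ) * z))
    = Real.pi ^ 3 / 8 * ∑ i ∈ Finset.range N, ∑ j ∈ Finset.range N, ∑ m ∈ Finset.range N,
        Aq i m k * Aq i j l * Aq j m (k + l) := by
  calc (∫ x in (0:ℝ)..Real.pi, ∫ y in (0:ℝ)..Real.pi, ∫ z in (0:ℝ)..Real.pi,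
        K N x y * K N y z * K N z x
          * Real.cos ((k:ℝ) * x) * Real.cos ((l:ℝ) * y) * Real.cos (((k+l : ℕ):ℝ) * z))
      = ∫ x in (0:ℝ)..Real.pi, ∫ y in (0:ℝ)..Real.pi,
          ∑ j ∈ Finset.range N, ∑ m ∈ Finset.range N,
            (K N x y * Real.cos ((k:ℝ) * x) * Real.cos ((l:ℝ) * y) * (4 * sf j y * sf m x))
              * ∫ z in (0:ℝ)..Real.pi, sf j z * sf m z * Real.cos (((k+l : ℕ):ℝ) * z) :=
        intervalIntegral.integral_congr fun x _ =>
          intervalIntegral.integral_congr fun y _ => step_z N k l x y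
    _ = ∫ x in (0:ℝ)..Real.pi, ∑ j ∈ Finset.range N, ∑ m ∈ Finset.range N, ∑ i ∈ Finset.range N,
          (8 * sf i x * sf m x * Real.cos ((k:ℝ) * x)
              * ∫ z in (0:ℝ)..Real.pi, sf j z * sf m z * Real.cos (((k+l : ℕ):ℝ) * z))
            * ∫ y in (0:ℝ)..Real.pi, sf i y * sf j y * Real.cos ((l:ℝ) * y) :=
        intervalIntegral.integral_congr fun x _ => step_y N k l x _
    _ = ∫ x in (0:ℝ)..Real.pi, ∑ j ∈ Finset.range N, ∑ m ∈ Finset.range N, ∑ i ∈ Finset.range N,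
          ((8 * (∫ z in (0:ℝ)..Real.pi, sf j z * sf m z * Real.cos (((k+l : ℕ):ℝ) * z))
              * ∫ y in (0:ℝ)..Real.pi, sf i y * sf j y * Real.cos ((l:ℝ) * y)))
            * (sf i x * sf m x * Real.cos ((k:ℝ) * x)) :=
        intervalIntegral.integral_congr fun x _ =>
          Finset.sum_congr rfl fun j _ => Finset.sum_congr rfl fun m _ =>
            Finset.sum_congr rfl fun i _ => by ring
    _ = ∑ j ∈ Finset.range N, ∑ m ∈ Finset.range N, ∑ i ∈ Finset.range N,
          ((8 * (∫ z in (0:ℝ)..Real.pi, sf j z * sf m z * Real.cos (((k+l : ℕ):ℝ) * z))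
              * ∫ y in (0:ℝ)..Real.pi, sf i y * sf j y * Real.cos ((l:ℝ) * y)))
            * ∫ x in (0:ℝ)..Real.pi, sf i x * sf m x * Real.cos ((k:ℝ) * x) := step_x N k _
    _ = ∑ j ∈ Finset.range N, ∑ m ∈ Finset.range N, ∑ i ∈ Finset.range N,
          Real.pi ^ 3 / 8 * (Aq i m k * Aq i j l * Aq j m (k + l)) := by
        refine Finset.sum_congr rfl fun j _ => Finset.sum_congr rfl fun m _ =>
          Finset.sum_congr rfl fun i _ => ?_
        rw [Jval j m (k + l) (by omega), Jval i j l hl, Jval i m k hk]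
        ring
    _ = _ := by
        rw [rot3 N (fun i j m => Real.pi ^ 3 / 8 * (Aq i m k * Aq i j l * Aq j m (k + l)))]
        simp only [← Finset.mul_sum]

lemma step_w (N k : ℕ) (x y z : ℝ) :
    (∫ w in (0:ℝ)..Real.pi, K N x y * K N y z * K N z w * K N w x
        * Real.cos ((k:ℝ) * x) * Real.cos ((k:ℝ) * y) * Real.cos ((k:ℝ) * z)
        * Real.cos ((k:ℝ) * w))
    = ∑ m ∈ Finset.range N, ∑ p ∈ Finset.range N,
        (K N x y * K N y z * Real.cos ((k:ℝ) * x) * Real.cos ((k:ℝ) * y) * Real.cos ((k:ℝ) * z)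
            * (4 * sf m z * sf p x))
          * ∫ w in (0:ℝ)..Real.pi, sf m w * sf p w * Real.cos ((k:ℝ) * w) := by
  have e : ∀ w, (K N z w) * (K N w x)
      = ∑ m ∈ Finset.range N, ∑ p ∈ Finset.range N, (4 * sf m z * sf p x) * (sf m w * sf p w) := by
    intro w
    rw [K_eq N z w, K_eq N w x]
    calc (2 * ∑ m ∈ Finset.range N, sf m z * sf m w) * (2 * ∑ p ∈ Finset.range N, sf p w * sf p x)
        = 4 * ((∑ m ∈ Finset.range N, sf m z * sf m w) * (∑ p ∈ Finset.range N, sf p w * sf p x)) := by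
          ring
      _ = 4 * ∑ m ∈ Finset.range N, ∑ p ∈ Finset.range N, (sf m z * sf m w) * (sf p w * sf p x) := by
          rw [Finset.sum_mul_sum]
      _ = _ := by
          rw [Finset.mul_sum]
          exact Finset.sum_congr rfl fun m _ => by
            rw [Finset.mul_sum]
            exact Finset.sum_congr rfl fun p _ => by ring
  have hpt : ∀ w, K N x y * K N y z * K N z w * K N w x
        * Real.cos ((k:ℝ) * x) * Real.cos ((k:ℝ) * y) * Real.cos ((k:ℝ) * z)
        * Real.cos ((k:ℝ) * w)
      = ∑ m ∈ Finset.range N, ∑ p ∈ Finset.range N,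
          (K N x y * K N y z * Real.cos ((k:ℝ) * x) * Real.cos ((k:ℝ) * y) * Real.cos ((k:ℝ) * z)
              * (4 * sf m z * sf p x))
            * (sf m w * sf p w * Real.cos ((k:ℝ) * w)) := by
    intro w
    calc K N x y * K N y z * K N z w * K N w x
          * Real.cos ((k:ℝ) * x) * Real.cos ((k:ℝ) * y) * Real.cos ((k:ℝ) * z)
          * Real.cos ((k:ℝ) * w)
        = (K N z w * K N w x) * (K N x y * K N y z
            * Real.cos ((k:ℝ) * x) * Real.cos ((k:ℝ) * y) * Real.cos ((k:ℝ) * z)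
            * Real.cos ((k:ℝ) * w)) := by ring
      _ = (∑ m ∈ Finset.range N, ∑ p ∈ Finset.range N, (4 * sf m z * sf p x) * (sf m w * sf p w))
            * (K N x y * K N y z
              * Real.cos ((k:ℝ) * x) * Real.cos ((k:ℝ) * y) * Real.cos ((k:ℝ) * z)
              * Real.cos ((k:ℝ) * w)) := by rw [e w]
      _ = _ := by
          rw [Finset.sum_mul]
          exact Finset.sum_congr rfl fun m _ => by
            rw [Finset.sum_mul]
            exact Finset.sum_congr rfl fun p _ => by ring
  rw [intervalIntegral.integral_congr (fun w _ => hpt w)]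
  rw [intervalIntegral.integral_finset_sum (fun m _ => by
    apply Continuous.intervalIntegrable
    apply continuous_finset_sum
    intro p _
    fun_prop)]
  refine Finset.sum_congr rfl fun m _ => ?_
  rw [intervalIntegral.integral_finset_sum (fun p _ => by
    apply Continuous.intervalIntegrable; fun_prop)]
  refine Finset.sum_congr rfl fun p _ => ?_
  rw [intervalIntegral.integral_const_mul]

lemma step_z4 (N k : ℕ) (x y : ℝ) (D : ℕ → ℕ → ℝ) :
    (∫ z in (0:ℝ)..Real.pi, ∑ m ∈ Finset.range N, ∑ p ∈ Finset.range N,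
        (K N x y * K N y z * Real.cos ((k:ℝ) * x) * Real.cos ((k:ℝ) * y) * Real.cos ((k:ℝ) * z)
            * (4 * sf m z * sf p x)) * D m p)
    = ∑ m ∈ Finset.range N, ∑ p ∈ Finset.range N, ∑ j ∈ Finset.range N,
        (8 * sf j y * sf p x * K N x y * Real.cos ((k:ℝ) * x) * Real.cos ((k:ℝ) * y) * D m p)
          * ∫ z in (0:ℝ)..Real.pi, sf j z * sf m z * Real.cos ((k:ℝ) * z) := by
  have hpt : ∀ z, (∑ m ∈ Finset.range N, ∑ p ∈ Finset.range N,
        (K N x y * K N y z * Real.cos ((k:ℝ) * x) * Real.cos ((k:ℝ) * y) * Real.cos ((k:ℝ) * z)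
            * (4 * sf m z * sf p x)) * D m p)
      = ∑ m ∈ Finset.range N, ∑ p ∈ Finset.range N, ∑ j ∈ Finset.range N,
          (8 * sf j y * sf p x * K N x y * Real.cos ((k:ℝ) * x) * Real.cos ((k:ℝ) * y) * D m p)
            * (sf j z * sf m z * Real.cos ((k:ℝ) * z)) := by
    intro z
    refine Finset.sum_congr rfl fun m _ => Finset.sum_congr rfl fun p _ => ?_
    calc (K N x y * K N y z * Real.cos ((k:ℝ) * x) * Real.cos ((k:ℝ) * y) * Real.cos ((k:ℝ) * z)
            * (4 * sf m z * sf p x)) * D m p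
        = (∑ j ∈ Finset.range N, sf j y * sf j z)
            * (8 * K N x y * Real.cos ((k:ℝ) * x) * Real.cos ((k:ℝ) * y) * Real.cos ((k:ℝ) * z)
              * sf m z * sf p x * D m p) := by
          rw [K_eq N y z]; ring
      _ = ∑ j ∈ Finset.range N, (sf j y * sf j z)
            * (8 * K N x y * Real.cos ((k:ℝ) * x) * Real.cos ((k:ℝ) * y) * Real.cos ((k:ℝ) * z)
              * sf m z * sf p x * D m p) := by rw [Finset.sum_mul]
      _ = _ := Finset.sum_congr rfl fun j _ => by ring
  rw [intervalIntegral.integral_congr (fun z _ => hpt z)]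
  rw [intervalIntegral.integral_finset_sum (fun m _ => by
    apply Continuous.intervalIntegrable
    apply continuous_finset_sum
    intro p _
    apply continuous_finset_sum
    intro j _
    fun_prop)]
  refine Finset.sum_congr rfl fun m _ => ?_
  rw [intervalIntegral.integral_finset_sum (fun p _ => by
    apply Continuous.intervalIntegrable
    apply continuous_finset_sum
    intro j _
    fun_prop)]
  refine Finset.sum_congr rfl fun p _ => ?_
  rw [intervalIntegral.integral_finset_sum (fun j _ => by
    apply Continuous.intervalIntegrable; fun_prop)]
  refine Finset.sum_congr rfl fun j _ => ?_
  rw [intervalIntegral.integral_const_mul]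

lemma step_y4 (N k : ℕ) (x : ℝ) (E : ℕ → ℕ → ℕ → ℝ) :
    (∫ y in (0:ℝ)..Real.pi, ∑ m ∈ Finset.range N, ∑ p ∈ Finset.range N, ∑ j ∈ Finset.range N,
        (8 * sf j y * sf p x * K N x y * Real.cos ((k:ℝ) * x) * Real.cos ((k:ℝ) * y) * E j m p))
    = ∑ m ∈ Finset.range N, ∑ p ∈ Finset.range N, ∑ j ∈ Finset.range N, ∑ i ∈ Finset.range N,
        (16 * sf i x * sf p x * Real.cos ((k:ℝ) * x) * E j m p)
          * ∫ y in (0:ℝ)..Real.pi, sf i y * sf j y * Real.cos ((k:ℝ) * y) := by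
  have hpt : ∀ y, (∑ m ∈ Finset.range N, ∑ p ∈ Finset.range N, ∑ j ∈ Finset.range N,
        (8 * sf j y * sf p x * K N x y * Real.cos ((k:ℝ) * x) * Real.cos ((k:ℝ) * y) * E j m p))
      = ∑ m ∈ Finset.range N, ∑ p ∈ Finset.range N, ∑ j ∈ Finset.range N, ∑ i ∈ Finset.range N,
          (16 * sf i x * sf p x * Real.cos ((k:ℝ) * x) * E j m p)
            * (sf i y * sf j y * Real.cos ((k:ℝ) * y)) := by
    intro y
    refine Finset.sum_congr rfl fun m _ => Finset.sum_congr rfl fun p _ =>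
      Finset.sum_congr rfl fun j _ => ?_
    calc 8 * sf j y * sf p x * K N x y * Real.cos ((k:ℝ) * x) * Real.cos ((k:ℝ) * y) * E j m p
        = (∑ i ∈ Finset.range N, sf i x * sf i y)
            * (16 * sf j y * sf p x * Real.cos ((k:ℝ) * x) * Real.cos ((k:ℝ) * y) * E j m p) := by
          rw [K_eq N x y]; ring
      _ = ∑ i ∈ Finset.range N, (sf i x * sf i y)
            * (16 * sf j y * sf p x * Real.cos ((k:ℝ) * x) * Real.cos ((k:ℝ) * y) * E j m p) := by
          rw [Finset.sum_mul]
      _ = _ := Finset.sum_congr rfl fun i _ => by ring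
  rw [intervalIntegral.integral_congr (fun y _ => hpt y)]
  rw [intervalIntegral.integral_finset_sum (fun m _ => by
    apply Continuous.intervalIntegrable
    apply continuous_finset_sum
    intro p _
    apply continuous_finset_sum
    intro j _
    apply continuous_finset_sum
    intro i _
    fun_prop)]
  refine Finset.sum_congr rfl fun m _ => ?_
  rw [intervalIntegral.integral_finset_sum (fun p _ => by
    apply Continuous.intervalIntegrable
    apply continuous_finset_sum
    intro j _
    apply continuous_finset_sum
    intro i _
    fun_prop)]
  refine Finset.sum_congr rfl fun p _ => ?_
  rw [intervalIntegral.integral_finset_sum (fun j _ => by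
    apply Continuous.intervalIntegrable
    apply continuous_finset_sum
    intro i _
    fun_prop)]
  refine Finset.sum_congr rfl fun j _ => ?_
  rw [intervalIntegral.integral_finset_sum (fun i _ => by
    apply Continuous.intervalIntegrable; fun_prop)]
  refine Finset.sum_congr rfl fun i _ => ?_
  rw [intervalIntegral.integral_const_mul]

lemma step_x4 (N k : ℕ) (C : ℕ → ℕ → ℕ → ℕ → ℝ) :
    (∫ x in (0:ℝ)..Real.pi, ∑ m ∈ Finset.range N, ∑ p ∈ Finset.range N, ∑ j ∈ Finset.range N,
        ∑ i ∈ Finset.range N, (C i j m p) * (sf i x * sf p x * Real.cos ((k:ℝ) * x)))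
    = ∑ m ∈ Finset.range N, ∑ p ∈ Finset.range N, ∑ j ∈ Finset.range N, ∑ i ∈ Finset.range N,
        (C i j m p) * ∫ x in (0:ℝ)..Real.pi, sf i x * sf p x * Real.cos ((k:ℝ) * x) := by
  rw [intervalIntegral.integral_finset_sum (fun m _ => by
    apply Continuous.intervalIntegrable
    apply continuous_finset_sum
    intro p _
    apply continuous_finset_sum
    intro j _
    apply continuous_finset_sum
    intro i _
    fun_prop)]
  refine Finset.sum_congr rfl fun m _ => ?_
  rw [intervalIntegral.integral_finset_sum (fun p _ => by
    apply Continuous.intervalIntegrable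
    apply continuous_finset_sum
    intro j _
    apply continuous_finset_sum
    intro i _
    fun_prop)]
  refine Finset.sum_congr rfl fun p _ => ?_
  rw [intervalIntegral.integral_finset_sum (fun j _ => by
    apply Continuous.intervalIntegrable
    apply continuous_finset_sum
    intro i _
    fun_prop)]
  refine Finset.sum_congr rfl fun j _ => ?_
  rw [intervalIntegral.integral_finset_sum (fun i _ => by
    apply Continuous.intervalIntegrable; fun_prop)]
  refine Finset.sum_congr rfl fun i _ => ?_
  rw [intervalIntegral.integral_const_mul]

lemma rot4 (N : ℕ) (f : ℕ → ℕ → ℕ → ℕ → ℝ) :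
    ∑ m ∈ Finset.range N, ∑ p ∈ Finset.range N, ∑ j ∈ Finset.range N, ∑ i ∈ Finset.range N,
        f i j m p
      = ∑ i ∈ Finset.range N, ∑ j ∈ Finset.range N, ∑ m ∈ Finset.range N, ∑ p ∈ Finset.range N,
        f i j m p := by
  calc ∑ m ∈ Finset.range N, ∑ p ∈ Finset.range N, ∑ j ∈ Finset.range N, ∑ i ∈ Finset.range N,
          f i j m p
      = ∑ m ∈ Finset.range N, ∑ p ∈ Finset.range N, ∑ i ∈ Finset.range N, ∑ j ∈ Finset.range N,
          f i j m p :=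
        Finset.sum_congr rfl fun m _ => Finset.sum_congr rfl fun p _ => Finset.sum_comm
    _ = ∑ m ∈ Finset.range N, ∑ i ∈ Finset.range N, ∑ p ∈ Finset.range N, ∑ j ∈ Finset.range N,
          f i j m p := Finset.sum_congr rfl fun m _ => Finset.sum_comm
    _ = ∑ i ∈ Finset.range N, ∑ m ∈ Finset.range N, ∑ p ∈ Finset.range N, ∑ j ∈ Finset.range N,
          f i j m p := Finset.sum_comm
    _ = ∑ i ∈ Finset.range N, ∑ m ∈ Finset.range N, ∑ j ∈ Finset.range N, ∑ p ∈ Finset.range N,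
          f i j m p :=
        Finset.sum_congr rfl fun i _ => Finset.sum_congr rfl fun m _ => Finset.sum_comm
    _ = _ := Finset.sum_congr rfl fun i _ => Finset.sum_comm

lemma quadruple_reduce (N k : ℕ) (hk : 1 ≤ k) :
    (∫ x in (0:ℝ)..Real.pi, ∫ y in (0:ℝ)..Real.pi, ∫ z in (0:ℝ)..Real.pi, ∫ w in (0:ℝ)..Real.pi,
        K N x y * K N y z * K N z w * K N w x
          * Real.cos ((k:ℝ) * x) * Real.cos ((k:ℝ) * y)
          * Real.cos ((k:ℝ) * z) * Real.cos ((k:ℝ) * w))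
    = Real.pi ^ 4 / 16 * ∑ i ∈ Finset.range N, ∑ j ∈ Finset.range N, ∑ m ∈ Finset.range N,
        ∑ p ∈ Finset.range N, Aq i j k * Aq j m k * Aq m p k * Aq p i k := by
  calc (∫ x in (0:ℝ)..Real.pi, ∫ y in (0:ℝ)..Real.pi, ∫ z in (0:ℝ)..Real.pi, ∫ w in (0:ℝ)..Real.pi,
        K N x y * K N y z * K N z w * K N w x
          * Real.cos ((k:ℝ) * x) * Real.cos ((k:ℝ) * y)
          * Real.cos ((k:ℝ) * z) * Real.cos ((k:ℝ) * w))
      = ∫ x in (0:ℝ)..Real.pi, ∫ y in (0:ℝ)..Real.pi, ∫ z in (0:ℝ)..Real.pi,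
          ∑ m ∈ Finset.range N, ∑ p ∈ Finset.range N,
            (K N x y * K N y z * Real.cos ((k:ℝ) * x) * Real.cos ((k:ℝ) * y) * Real.cos ((k:ℝ) * z)
                * (4 * sf m z * sf p x))
              * ∫ w in (0:ℝ)..Real.pi, sf m w * sf p w * Real.cos ((k:ℝ) * w) :=
        intervalIntegral.integral_congr fun x _ => intervalIntegral.integral_congr fun y _ =>
          intervalIntegral.integral_congr fun z _ => step_w N k x y z
    _ = ∫ x in (0:ℝ)..Real.pi, ∫ y in (0:ℝ)..Real.pi,
          ∑ m ∈ Finset.range N, ∑ p ∈ Finset.range N, ∑ j ∈ Finset.range N,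
            (8 * sf j y * sf p x * K N x y * Real.cos ((k:ℝ) * x) * Real.cos ((k:ℝ) * y)
                * ((∫ w in (0:ℝ)..Real.pi, sf m w * sf p w * Real.cos ((k:ℝ) * w))))
              * ∫ z in (0:ℝ)..Real.pi, sf j z * sf m z * Real.cos ((k:ℝ) * z) :=
        intervalIntegral.integral_congr fun x _ => intervalIntegral.integral_congr fun y _ =>
          step_z4 N k x y _
    _ = ∫ x in (0:ℝ)..Real.pi,
          ∑ m ∈ Finset.range N, ∑ p ∈ Finset.range N, ∑ j ∈ Finset.range N,
            ∑ i ∈ Finset.range N,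
            (16 * sf i x * sf p x * Real.cos ((k:ℝ) * x)
                * (((∫ w in (0:ℝ)..Real.pi, sf m w * sf p w * Real.cos ((k:ℝ) * w)))
                  * ∫ z in (0:ℝ)..Real.pi, sf j z * sf m z * Real.cos ((k:ℝ) * z)))
              * ∫ y in (0:ℝ)..Real.pi, sf i y * sf j y * Real.cos ((k:ℝ) * y) := by
        refine intervalIntegral.integral_congr fun x _ => ?_
        have h := step_y4 N k x (fun j m p =>
          ((∫ w in (0:ℝ)..Real.pi, sf m w * sf p w * Real.cos ((k:ℝ) * w))
            * ∫ z in (0:ℝ)..Real.pi, sf j z * sf m z * Real.cos ((k:ℝ) * z)))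
        rw [← h]
        refine intervalIntegral.integral_congr fun y _ => ?_
        refine Finset.sum_congr rfl fun m _ => Finset.sum_congr rfl fun p _ =>
          Finset.sum_congr rfl fun j _ => by ring
    _ = ∫ x in (0:ℝ)..Real.pi,
          ∑ m ∈ Finset.range N, ∑ p ∈ Finset.range N, ∑ j ∈ Finset.range N,
            ∑ i ∈ Finset.range N,
            ((16 * ((∫ w in (0:ℝ)..Real.pi, sf m w * sf p w * Real.cos ((k:ℝ) * w))
                  * ((∫ z in (0:ℝ)..Real.pi, sf j z * sf m z * Real.cos ((k:ℝ) * z))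
                    * ∫ y in (0:ℝ)..Real.pi, sf i y * sf j y * Real.cos ((k:ℝ) * y)))))
              * (sf i x * sf p x * Real.cos ((k:ℝ) * x)) :=
        intervalIntegral.integral_congr fun x _ =>
          Finset.sum_congr rfl fun m _ => Finset.sum_congr rfl fun p _ =>
            Finset.sum_congr rfl fun j _ => Finset.sum_congr rfl fun i _ => by ring
    _ = ∑ m ∈ Finset.range N, ∑ p ∈ Finset.range N, ∑ j ∈ Finset.range N,
          ∑ i ∈ Finset.range N,
          ((16 * ((∫ w in (0:ℝ)..Real.pi, sf m w * sf p w * Real.cos ((k:ℝ) * w))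
                * ((∫ z in (0:ℝ)..Real.pi, sf j z * sf m z * Real.cos ((k:ℝ) * z))
                  * ∫ y in (0:ℝ)..Real.pi, sf i y * sf j y * Real.cos ((k:ℝ) * y)))))
            * ∫ x in (0:ℝ)..Real.pi, sf i x * sf p x * Real.cos ((k:ℝ) * x) := step_x4 N k _
    _ = ∑ m ∈ Finset.range N, ∑ p ∈ Finset.range N, ∑ j ∈ Finset.range N,
          ∑ i ∈ Finset.range N,
          Real.pi ^ 4 / 16 * (Aq i j k * Aq j m k * Aq m p k * Aq p i k) := by
        refine Finset.sum_congr rfl fun m _ => Finset.sum_congr rfl fun p _ =>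
          Finset.sum_congr rfl fun j _ => Finset.sum_congr rfl fun i _ => ?_
        rw [Jval m p k hk, Jval j m k hk, Jval i j k hk, Jval i p k hk]
        rw [Aq_comm m p, Aq_comm i p]
        ring
    _ = _ := by
        rw [rot4 N (fun i j m p => Real.pi ^ 4 / 16 * (Aq i j k * Aq j m k * Aq m p k * Aq p i k))]
        simp only [← Finset.mul_sum]

end SOoddAux

/-- Triple and quadruple integral identities for the `SO(2N+1)` kernel: for `k, ℓ ≥ 1`,
`(1/π³) ∫∫∫ K(x,y)K(y,z)K(z,x) cos(kx)cos(ℓy)cos((k+ℓ)z)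
  = (N−k−ℓ)⁺/4 + (α(k+ℓ,ℓ,k+ℓ) + α(k+ℓ,k,k+ℓ))/8`, and
`(1/π⁴) ∫∫∫∫ K(x,y)K(y,z)K(z,w)K(w,x) cos(kx)cos(ky)cos(kz)cos(kw)
  = (N−k)⁺/4 + (2N−k)⁺/16`. -/
theorem kernel_triple_quadruple_integrals_SO_odd (N : ℕ) (hN : 1 ≤ N) :
    ∀ k l : ℕ, 1 ≤ k → 1 ≤ l →
      ((1 / Real.pi ^ 3) * ∫ x in (0:ℝ)..Real.pi, ∫ y in (0:ℝ)..Real.pi,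
          ∫ z in (0:ℝ)..Real.pi,
          K N x y * K N y z * K N z x
            * Real.cos ((k : ℝ) * x) * Real.cos ((l : ℝ) * y)
            * Real.cos (((k : ℝ) + (l : ℝ)) * z)
        = max ((N : ℝ) - (k : ℝ) - (l : ℝ)) 0 / 4
          + (alph N ((k : ℤ) + (l : ℤ)) (l : ℤ) ((k : ℤ) + (l : ℤ))
            + alph N ((k : ℤ) + (l : ℤ)) (k : ℤ) ((k : ℤ) + (l : ℤ))) / 8) ∧
      ((1 / Real.pi ^ 4) * ∫ x in (0:ℝ)..Real.pi, ∫ y in (0:ℝ)..Real.pi,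
          ∫ z in (0:ℝ)..Real.pi, ∫ w in (0:ℝ)..Real.pi,
          K N x y * K N y z * K N z w * K N w x
            * Real.cos ((k : ℝ) * x) * Real.cos ((k : ℝ) * y)
            * Real.cos ((k : ℝ) * z) * Real.cos ((k : ℝ) * w)
        = max ((N : ℝ) - (k : ℝ)) 0 / 4 + max (2 * (N : ℝ) - (k : ℝ)) 0 / 16) := by
  intro k l hk hl
  constructor
  · have hcast : ((k : ℝ) + (l : ℝ)) = (((k + l : ℕ)) : ℝ) := by push_cast; ring
    simp only [hcast]
    rw [SOoddAux.triple_reduce N k l hk hl, SOoddAux.sum3 N k l hk hl]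
    have halph1 : alph N ((k : ℤ) + (l : ℤ)) (l : ℤ) ((k : ℤ) + (l : ℤ))
        = ((max (min ((k:ℤ) + l) (N:ℤ) + min (l:ℤ) (N:ℤ) - ((k:ℤ) + l)) 0 : ℤ) : ℝ) := rfl
    have halph2 : alph N ((k : ℤ) + (l : ℤ)) (k : ℤ) ((k : ℤ) + (l : ℤ))
        = ((max (min ((k:ℤ) + l) (N:ℤ) + min (k:ℤ) (N:ℤ) - ((k:ℤ) + l)) 0 : ℤ) : ℝ) := rfl
    rw [halph1, halph2]
    have hpi : Real.pi ≠ 0 := Real.pi_ne_zero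
    field_simp
    ring
  · rw [SOoddAux.quadruple_reduce N k hk, SOoddAux.sum4 N k hk]
    rw [show ((max (2 * (N:ℤ) - k) 0 : ℤ) : ℝ) = max (2 * (N:ℝ) - k) 0 by push_cast; ring_nf]
    have hpi : Real.pi ≠ 0 := Real.pi_ne_zero
    field_simp
    ring
end
end

section
/- Let X_k, Y_k (k ≥ 1) be independent identically distributed standard real Gaussian random variables and let ξ be the almost-sure limit of the series Σ_{k≥1} (X_k² + Y_k² − 2)/k. Then for every t ∈ ℝ, the characteristic function of ξ satisfies E[exp(i t ξ)] = Γ(1 − 2it) · exp(−2γ i t), where Γ is the complex Gamma function and γ is the Euler–Mascheroni constant. -/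
open MeasureTheory ProbabilityTheory Filter
open Finset Topology
open scoped ENNReal NNReal

noncomputable section


lemma aux_iIndepFun_congr {Ω ι : Type*} [MeasurableSpace Ω] {P : Measure Ω}
    {f g : ι → Ω → ℝ} (hf : iIndepFun f P)
    (h : ∀ i, f i =ᵐ[P] g i) : iIndepFun g P := by
  rw [iIndepFun_iff_measure_inter_preimage_eq_mul] at hf ⊢
  intro S sets hsets
  have h1 : ∀ i, i ∈ S → P (g i ⁻¹' sets i) = P (f i ⁻¹' sets i) := by
    intro i _
    refine measure_congr ?_
    filter_upwards [h i] with ω hω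
    show (g i ω ∈ sets i) = (f i ω ∈ sets i)
    rw [hω]
  have h2 : P (⋂ i ∈ S, g i ⁻¹' sets i) = P (⋂ i ∈ S, f i ⁻¹' sets i) := by
    refine measure_congr ?_
    have hae : ∀ᵐ ω ∂P, ∀ i ∈ S, f i ω = g i ω :=
      (ae_ball_iff S.countable_toSet).mpr fun i _ => h i
    filter_upwards [hae] with ω hω
    show (ω ∈ ⋂ i ∈ S, g i ⁻¹' sets i) = (ω ∈ ⋂ i ∈ S, f i ⁻¹' sets i)
    simp only [Set.mem_iInter, Set.mem_preimage, eq_iff_iff]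
    exact ⟨fun hx i hi => (hω i hi) ▸ hx i hi, fun hx i hi => (hω i hi).symm ▸ hx i hi⟩
  rw [h2, hf S hsets]
  exact (Finset.prod_congr rfl h1).symm

lemma aux_gauss_int (s : ℝ) :
    (∫ x : ℝ, Complex.exp (Complex.I * s * x ^ 2) ∂(gaussianReal 0 1))
      = ((Real.sqrt (2 * Real.pi) : ℂ))⁻¹
        * ((Real.pi : ℂ) / ((1:ℂ)/2 - Complex.I * s)) ^ ((1:ℂ)/2) := by
  have hb : (0:ℝ) < ((1:ℂ)/2 - Complex.I * s).re := by
    simp [Complex.sub_re, Complex.mul_re]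
  rw [gaussianReal_of_var_ne_zero 0 one_ne_zero]
  have hd : (Measure.withDensity ℙ (gaussianPDF 0 1))
      = Measure.withDensity ℙ (fun x => ((gaussianPDFReal 0 1 x).toNNReal : ℝ≥0∞)) := rfl
  rw [hd, integral_withDensity_eq_integral_smul ((measurable_gaussianPDFReal 0 1).real_toNNReal)]
  have hpt : ∀ x : ℝ, (gaussianPDFReal 0 1 x).toNNReal • Complex.exp (Complex.I * s * x ^ 2)
      = ((Real.sqrt (2 * Real.pi) : ℂ))⁻¹
        * Complex.exp (-(((1:ℂ)/2 - Complex.I * s)) * x ^ 2) := by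
    intro x
    have hnn : 0 ≤ gaussianPDFReal 0 1 x := gaussianPDFReal_nonneg 0 1 x
    rw [NNReal.smul_def, Real.coe_toNNReal _ hnn, Complex.real_smul]
    have : gaussianPDFReal 0 1 x = (Real.sqrt (2 * Real.pi))⁻¹ * Real.exp (-(x^2/2)) := by
      rw [gaussianPDFReal, neg_div]
      norm_num
    rw [this]
    push_cast
    rw [mul_assoc, ← Complex.exp_add]
    congr 2
    ring
  simp_rw [hpt]
  rw [integral_const_mul, integral_gaussian_complex hb]

lemma aux_gauss_sq (s : ℝ) :
    (∫ x : ℝ, Complex.exp (Complex.I * s * x ^ 2) ∂(gaussianReal 0 1)) ^ 2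
      = (1 - 2 * Complex.I * s)⁻¹ := by
  have hb : (0:ℝ) < ((1:ℂ)/2 - Complex.I * s).re := by
    simp [Complex.sub_re, Complex.mul_re]
  have hbne : ((1:ℂ)/2 - Complex.I * s) ≠ 0 := by
    intro h; rw [h] at hb; simp at hb
  have hpine : (Real.pi : ℂ) ≠ 0 := by
    exact_mod_cast Real.pi_ne_zero
  have hwne : ((Real.pi : ℂ) / ((1:ℂ)/2 - Complex.I * s)) ≠ 0 := div_ne_zero hpine hbne
  rw [aux_gauss_int, mul_pow]
  have h1 : (((Real.sqrt (2 * Real.pi) : ℂ))⁻¹) ^ 2 = ((2 * Real.pi : ℝ) : ℂ)⁻¹ := by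
    rw [inv_pow]
    norm_cast
    rw [Real.sq_sqrt (by positivity)]
  have h2 : (((Real.pi : ℂ) / ((1:ℂ)/2 - Complex.I * s)) ^ ((1:ℂ)/2)) ^ 2
      = (Real.pi : ℂ) / ((1:ℂ)/2 - Complex.I * s) := by
    rw [sq, ← Complex.cpow_add _ _ hwne]
    norm_num
  rw [h1, h2]
  have h3 : (1 - 2 * Complex.I * s) = 2 * ((1:ℂ)/2 - Complex.I * s) := by ring
  rw [h3]
  push_cast
  field_simp

lemma aux_indep_integral_mul {Ω : Type*} [MeasurableSpace Ω] {P : Measure Ω}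
    [IsProbabilityMeasure P] {A B : Ω → ℝ} (h : IndepFun A B P)
    (hA : AEMeasurable A P) (hB : AEMeasurable B P)
    {f g : ℝ → ℂ} (hf : Continuous f) (hg : Continuous g) :
    ∫ ω, f (A ω) * g (B ω) ∂P = (∫ ω, f (A ω) ∂P) * ∫ ω, g (B ω) ∂P := by
  rw [indepFun_iff_map_prod_eq_prod_map_map hA hB] at h
  have hmA : IsProbabilityMeasure (P.map A) := Measure.isProbabilityMeasure_map hA
  have hmB : IsProbabilityMeasure (P.map B) := Measure.isProbabilityMeasure_map hB
  have h1 : ∫ ω, f (A ω) * g (B ω) ∂P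
      = ∫ p : ℝ × ℝ, f p.1 * g p.2 ∂(P.map (fun ω => (A ω, B ω))) :=
    (integral_map (hA.prodMk hB)
      ((hf.comp continuous_fst).mul (hg.comp continuous_snd)).aestronglyMeasurable).symm
  rw [h1, h, integral_prod_mul, integral_map hA hf.aestronglyMeasurable,
    integral_map hB hg.aestronglyMeasurable]


lemma aux_prod_tendsto (t : ℝ) :
    Tendsto (fun n => ∏ k ∈ Finset.range n,
      (Complex.exp ((-2*Complex.I*t)/((k:ℂ)+1)) * (1 + (-2*Complex.I*t)/((k:ℂ)+1))⁻¹)) atTop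
      (𝓝 (Complex.Gamma (1 - 2*Complex.I*t) *
        Complex.exp (-2*(Real.eulerMascheroniConstant:ℂ)*Complex.I*t))) := by
  set z : ℂ := -2*Complex.I*t with hz
  have hre : z.re = 0 := by simp [hz]
  have hwk : ∀ k : ℕ, (z + 1 + k) ≠ 0 := by
    intro k h
    have h2 : (z + 1 + (k:ℂ)).re = 1 + k := by simp [hre]
    rw [h, Complex.zero_re] at h2
    have : (0:ℝ) ≤ (k:ℝ) := Nat.cast_nonneg k
    linarith
  have hkne : ∀ k : ℕ, ((k:ℂ)+1) ≠ 0 := by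
    intro k h
    have h2 : ((k:ℂ)+1).re = k + 1 := by simp
    rw [h, Complex.zero_re] at h2
    have : (0:ℝ) ≤ (k:ℝ) := Nat.cast_nonneg k
    linarith
  have key : ∀ n : ℕ, 1 ≤ n →
      (∏ k ∈ Finset.range n, (Complex.exp (z/((k:ℂ)+1)) * (1 + z/((k:ℂ)+1))⁻¹))
        = Complex.GammaSeq (z+1) n * ((z+1+n)/n)
          * Complex.exp (z*(((harmonic n : ℝ) : ℂ) - (Real.log n : ℂ))) := by
    intro n hn
    have hn0 : ((n:ℂ)) ≠ 0 := Nat.cast_ne_zero.mpr (by omega)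
    have hfac : (∏ k ∈ Finset.range n, ((k:ℂ)+1)) = (Nat.factorial n : ℂ) := by
      rw [← Finset.prod_range_add_one_eq_factorial]
      push_cast
      rfl
    have hfacne : ((Nat.factorial n : ℂ)) ≠ 0 :=
      Nat.cast_ne_zero.mpr (Nat.factorial_ne_zero n)
    have hprodne : (∏ j ∈ Finset.range n, (z+1+j)) ≠ 0 :=
      Finset.prod_ne_zero_iff.mpr fun k _ => hwk k
    have hH : ((harmonic n : ℝ) : ℂ) = ∑ k ∈ Finset.range n, ((k:ℂ)+1)⁻¹ := by
      rw [harmonic]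
      push_cast
      rfl
    have hsum : ∑ k ∈ Finset.range n, z/((k:ℂ)+1) = z * ((harmonic n : ℝ) : ℂ) := by
      rw [hH, Finset.mul_sum]
      exact Finset.sum_congr rfl fun k _ => div_eq_mul_inv z _
    have hL : Complex.exp ((Real.log n : ℂ)) = (n:ℂ) := by
      rw [← Complex.ofReal_exp, Real.exp_log (by positivity : (0:ℝ) < (n:ℝ))]
      norm_cast
    have hcpow : ((n:ℂ)) ^ (z+1) = Complex.exp (z * (Real.log n : ℂ)) * (n:ℂ) := by
      rw [Complex.cpow_def_of_ne_zero hn0, ← Complex.natCast_log, mul_add, mul_one,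
        Complex.exp_add, hL, mul_comm ((Real.log (n:ℝ) : ℂ)) z]
    rw [Finset.prod_mul_distrib, ← Complex.exp_sum, hsum]
    have hterm : ∀ k ∈ Finset.range n, (1 + z/((k:ℂ)+1)) = (z+1+k)/((k:ℂ)+1) := by
      intro k _
      rw [eq_comm, div_eq_iff (hkne k), add_mul, one_mul, div_mul_cancel₀ _ (hkne k)]
      ring
    rw [Finset.prod_congr rfl fun k hk => congrArg Inv.inv (hterm k hk),
      Finset.prod_inv_distrib, Finset.prod_div_distrib, hfac,
      Complex.GammaSeq, Finset.prod_range_succ, hcpow, mul_sub, Complex.exp_sub]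
    field_simp [Complex.exp_ne_zero, hprodne, hwk n, hn0, hfacne]
  have h1 := Complex.GammaSeq_tendsto_Gamma (z+1)
  have hinv : Tendsto (fun n : ℕ => ((n:ℂ))⁻¹) atTop (𝓝 0) := by
    have h := (Complex.continuous_ofReal.tendsto 0).comp tendsto_inv_atTop_nhds_zero_nat
    simpa [Function.comp_def, Complex.ofReal_inv] using h
  have h2 : Tendsto (fun n : ℕ => ((z+1+n)/n : ℂ)) atTop (𝓝 1) := by
    have h2' : Tendsto (fun n : ℕ => (z+1) * ((n:ℂ))⁻¹ + 1) atTop (𝓝 1) := by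
      have := (tendsto_const_nhds (x := z+1) (f := atTop)).mul hinv
      simpa using this.add (tendsto_const_nhds (x := (1:ℂ)))
    refine h2'.congr' ?_
    filter_upwards [eventually_ge_atTop 1] with n hn
    have hn0 : ((n:ℂ)) ≠ 0 := Nat.cast_ne_zero.mpr (by omega)
    field_simp
  have h3 : Tendsto (fun n : ℕ => Complex.exp (z*(((harmonic n : ℝ):ℂ) - (Real.log n : ℂ))))
      atTop (𝓝 (Complex.exp (z * (Real.eulerMascheroniConstant : ℂ)))) := by
    have hc : Tendsto (fun r : ℝ => Complex.exp (z * (r:ℂ)))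
        (𝓝 Real.eulerMascheroniConstant)
        (𝓝 (Complex.exp (z * (Real.eulerMascheroniConstant : ℂ)))) :=
      ((Complex.continuous_exp.comp (continuous_const.mul Complex.continuous_ofReal)).tendsto _)
    have := hc.comp Real.tendsto_harmonic_sub_log
    simpa only [Function.comp_def, Complex.ofReal_sub] using this
  have hall := (h1.mul h2).mul h3
  have hfin : Complex.Gamma (z+1) * 1 * Complex.exp (z * (Real.eulerMascheroniConstant : ℂ))
      = Complex.Gamma (1 - 2*Complex.I*t)
        * Complex.exp (-2*(Real.eulerMascheroniConstant:ℂ)*Complex.I*t) := by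
    rw [mul_one]
    congr 1
    · congr 1; rw [hz]; ring
    · congr 1; rw [hz]; ring
  rw [hfin] at hall
  refine hall.congr' ?_
  filter_upwards [eventually_ge_atTop 1] with n hn
  exact (key n hn).symm


/-- Let `X_k, Y_k` be i.i.d. standard Gaussians and let `ξ` be the a.s. limit of
`Σ_{k≥1} (X_k² + Y_k² − 2)/k`. Then for every `t ∈ ℝ`,
`E[exp(itξ)] = Γ(1 − 2it) · exp(−2γit)`. -/
theorem xi_unitary_charFun
    {Ω : Type*} [MeasurableSpace Ω] (P : Measure Ω) [IsProbabilityMeasure P]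
    (X Y : ℕ → Ω → ℝ)
    (hindep : iIndepFun
      (fun p : ℕ × Bool => if p.2 then X p.1 else Y p.1) P)
    (hX : ∀ k, Measure.map (X k) P = gaussianReal 0 1)
    (hY : ∀ k, Measure.map (Y k) P = gaussianReal 0 1)
    (ξ : Ω → ℝ) (hmeas : Measurable ξ)
    (hlim : ∀ᵐ ω ∂P, Tendsto
      (fun n => ∑ k ∈ Finset.range n, (X (k + 1) ω ^ 2 + Y (k + 1) ω ^ 2 - 2) / ((k : ℝ) + 1))
      atTop (nhds (ξ ω))) :
    ∀ t : ℝ, ∫ ω, Complex.exp (Complex.I * (t : ℂ) * (ξ ω : ℂ)) ∂P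
      = Complex.Gamma (1 - 2 * Complex.I * (t : ℂ))
        * Complex.exp (-2 * (Real.eulerMascheroniConstant : ℂ) * Complex.I * (t : ℂ)) := by
  --
  intro t
  classical
  -- measurable modifications
  have hXae : ∀ k, AEMeasurable (X k) P := by
    intro k
    by_contra h
    have h0 := Measure.map_of_not_aemeasurable h
    rw [hX k] at h0
    have h1 := measure_univ (μ := gaussianReal 0 1)
    rw [h0] at h1
    simp at h1
  have hYae : ∀ k, AEMeasurable (Y k) P := by
    intro k
    by_contra h
    have h0 := Measure.map_of_not_aemeasurable h
    rw [hY k] at h0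
    have h1 := measure_univ (μ := gaussianReal 0 1)
    rw [h0] at h1
    simp at h1
  set X' : ℕ → Ω → ℝ := fun k => (hXae k).mk (X k) with hX'def
  set Y' : ℕ → Ω → ℝ := fun k => (hYae k).mk (Y k) with hY'def
  have hX'm : ∀ k, Measurable (X' k) := fun k => (hXae k).measurable_mk
  have hY'm : ∀ k, Measurable (Y' k) := fun k => (hYae k).measurable_mk
  have hX'e : ∀ k, X k =ᵐ[P] X' k := fun k => (hXae k).ae_eq_mk
  have hY'e : ∀ k, Y k =ᵐ[P] Y' k := fun k => (hYae k).ae_eq_mk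
  have hX' : ∀ k, Measure.map (X' k) P = gaussianReal 0 1 := fun k => by
    rw [← Measure.map_congr (hX'e k)]; exact hX k
  have hY' : ∀ k, Measure.map (Y' k) P = gaussianReal 0 1 := fun k => by
    rw [← Measure.map_congr (hY'e k)]; exact hY k
  set W' : ℕ × Bool → Ω → ℝ := fun p => if p.2 then X' p.1 else Y' p.1 with hW'def
  have hW'm : ∀ p, Measurable (W' p) := by
    rintro ⟨k, b⟩
    cases b
    · simpa [hW'def] using hY'm k
    · simpa [hW'def] using hX'm k
  have hindep' : iIndepFun W' P := by
    refine aux_iIndepFun_congr hindep ?_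
    rintro ⟨k, b⟩
    cases b
    · filter_upwards [hY'e k] with ω h
      simpa [hW'def] using h
    · filter_upwards [hX'e k] with ω h
      simpa [hW'def] using h
  set Z : ℕ → Ω → ℝ :=
    fun k ω => ((X' (k+1) ω)^2 + (Y' (k+1) ω)^2 - 2)/((k:ℝ)+1) with hZdef
  have hZm : ∀ k, Measurable (Z k) := by
    intro k
    apply Measurable.div_const
    exact (((hX'm (k+1)).pow_const 2).add ((hY'm (k+1)).pow_const 2)).sub measurable_const
  set S : ℕ → Ω → ℝ := fun n ω => ∑ k ∈ Finset.range n, Z k ω with hSdef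
  have hSm : ∀ n, Measurable (S n) := fun n => Finset.measurable_sum _ fun k _ => hZm k
  -- independence of S n and Z n
  have hSZ : ∀ n, IndepFun (S n) (Z n) P := by
    intro n
    set T₁ : Finset (ℕ × Bool) :=
      ((Finset.range n).image (fun k => k + 1)) ×ˢ (Finset.univ : Finset Bool) with hT₁
    set T₂ : Finset (ℕ × Bool) := ({n+1} : Finset ℕ) ×ˢ (Finset.univ : Finset Bool) with hT₂
    have hdisj : Disjoint T₁ T₂ := by
      rw [Finset.disjoint_left]
      rintro ⟨k, b⟩ h1 h2
      simp only [hT₁, hT₂, Finset.mem_product, Finset.mem_image, Finset.mem_range,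
        Finset.mem_singleton] at h1 h2
      obtain ⟨⟨a, ha, hak⟩, -⟩ := h1
      obtain ⟨hk, -⟩ := h2
      omega
    have hbase := hindep'.indepFun_finset T₁ T₂ hdisj hW'm
    let g₁ : (∀ i : T₁, ℝ) → ℝ := fun v =>
      ∑ i ∈ T₁.attach, (if (i:ℕ×Bool).2 then (v i)^2 else (v i)^2 - 2) / (((i:ℕ×Bool).1 : ℝ))
    let g₂ : (∀ i : T₂, ℝ) → ℝ := fun v =>
      ∑ i ∈ T₂.attach, (if (i:ℕ×Bool).2 then (v i)^2 else (v i)^2 - 2) / (((i:ℕ×Bool).1 : ℝ))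
    have hg₁ : Measurable g₁ := by
      apply Finset.measurable_sum
      intro i _
      cases hc : (i:ℕ×Bool).2 <;> simp only [hc, reduceIte, Bool.false_eq_true, if_false, if_true] <;> fun_prop
    have hg₂ : Measurable g₂ := by
      apply Finset.measurable_sum
      intro i _
      cases hc : (i:ℕ×Bool).2 <;> simp only [hc, reduceIte, Bool.false_eq_true, if_false, if_true] <;> fun_prop
    have hcomp := hbase.comp hg₁ hg₂
    have e₁ : (g₁ ∘ (fun a (i : T₁) => W' (i:ℕ×Bool) a)) = S n := by
      funext a
      show (∑ i ∈ T₁.attach,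
        (if (i:ℕ×Bool).2 then (W' (i:ℕ×Bool) a)^2 else (W' (i:ℕ×Bool) a)^2 - 2)
          / (((i:ℕ×Bool).1 : ℝ))) = S n a
      rw [Finset.sum_attach T₁
        (fun p => (if p.2 then (W' p a)^2 else (W' p a)^2 - 2)/(p.1:ℝ))]
      rw [hT₁, Finset.sum_product]
      rw [Finset.sum_image (by intro x _ y _ h; simp only at h; omega)]
      refine Finset.sum_congr rfl ?_
      intro k hk
      rw [Fintype.sum_bool]
      simp only [hW'def, if_true, if_false, hZdef]
      push_cast
      ring
    have e₂ : (g₂ ∘ (fun a (i : T₂) => W' (i:ℕ×Bool) a)) = Z n := by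
      funext a
      show (∑ i ∈ T₂.attach,
        (if (i:ℕ×Bool).2 then (W' (i:ℕ×Bool) a)^2 else (W' (i:ℕ×Bool) a)^2 - 2)
          / (((i:ℕ×Bool).1 : ℝ))) = Z n a
      rw [Finset.sum_attach T₂
        (fun p => (if p.2 then (W' p a)^2 else (W' p a)^2 - 2)/(p.1:ℝ))]
      rw [hT₂, Finset.sum_product, Finset.sum_singleton]
      rw [Fintype.sum_bool]
      simp only [hW'def, if_true, if_false, hZdef]
      push_cast
      ring
    rw [e₁, e₂] at hcomp
    exact hcomp
  -- characteristic function of each term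
  have hck : ∀ k : ℕ, (∫ ω, Complex.exp (Complex.I * (t:ℂ) * (Z k ω : ℂ)) ∂P)
      = Complex.exp ((-2*Complex.I*t)/((k:ℂ)+1))
        * (1 + (-2*Complex.I*t)/((k:ℂ)+1))⁻¹ := by
    intro k
    have hkne : ((k:ℂ)+1) ≠ 0 := by
      intro h
      have h2 : ((k:ℂ)+1).re = k + 1 := by simp
      rw [h, Complex.zero_re] at h2
      have : (0:ℝ) ≤ (k:ℝ) := Nat.cast_nonneg k
      linarith
    set f : ℝ → ℂ := fun x => Complex.exp ((Complex.I*(t:ℂ)/((k:ℂ)+1)) * (x:ℂ)^2) with hf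
    have hfc : Continuous f :=
      Complex.continuous_exp.comp (continuous_const.mul ((Complex.continuous_ofReal).pow 2))
    have hpt : ∀ ω, Complex.exp (Complex.I * (t:ℂ) * (Z k ω : ℂ))
        = Complex.exp ((-2*Complex.I*t)/((k:ℂ)+1))
          * (f (X' (k+1) ω) * f (Y' (k+1) ω)) := by
      intro ω
      rw [hf]
      simp only [hZdef]
      rw [← Complex.exp_add, ← Complex.exp_add]
      congr 1
      push_cast
      field_simp
      ring
    simp_rw [hpt]
    rw [integral_const_mul]
    have hXYind : IndepFun (X' (k+1)) (Y' (k+1)) P := by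
      have := hindep'.indepFun (i := (k+1, true)) (j := (k+1, false)) (by simp)
      simpa [hW'def] using this
    rw [aux_indep_integral_mul hXYind (hX'm (k+1)).aemeasurable (hY'm (k+1)).aemeasurable hfc hfc]
    have hmapX : ∫ ω, f (X' (k+1) ω) ∂P = ∫ x, f x ∂(gaussianReal 0 1) := by
      rw [← hX' (k+1), integral_map (hX'm (k+1)).aemeasurable hfc.aestronglyMeasurable]
    have hmapY : ∫ ω, f (Y' (k+1) ω) ∂P = ∫ x, f x ∂(gaussianReal 0 1) := by
      rw [← hY' (k+1), integral_map (hY'm (k+1)).aemeasurable hfc.aestronglyMeasurable]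
    rw [hmapX, hmapY, ← sq]
    have harg : ∀ x : ℝ, f x = Complex.exp (Complex.I * ((t/((k:ℝ)+1) : ℝ):ℂ) * (x:ℂ)^2) := by
      intro x
      rw [hf]
      push_cast
      ring_nf
    simp_rw [harg]
    rw [aux_gauss_sq (t/((k:ℝ)+1))]
    congr 1
    push_cast
    field_simp
    rw [sub_eq_add_neg]
  -- factorization of the characteristic function of partial sums
  have hfact : ∀ n : ℕ, (∫ ω, Complex.exp (Complex.I * (t:ℂ) * (S n ω : ℂ)) ∂P)
      = ∏ k ∈ Finset.range n, (Complex.exp ((-2*Complex.I*t)/((k:ℂ)+1))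
          * (1 + (-2*Complex.I*t)/((k:ℂ)+1))⁻¹) := by
    intro n
    induction n with
    | zero =>
      simp [hSdef]
    | succ n ih =>
      have hsplit : ∀ ω, Complex.exp (Complex.I * (t:ℂ) * (S (n+1) ω : ℂ))
          = Complex.exp (Complex.I * (t:ℂ) * (S n ω : ℂ))
            * Complex.exp (Complex.I * (t:ℂ) * (Z n ω : ℂ)) := by
        intro ω
        rw [← Complex.exp_add]
        congr 1
        have hsum : S (n+1) ω = S n ω + Z n ω := Finset.sum_range_succ _ _
        rw [hsum]
        push_cast
        ring
      simp_rw [hsplit]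
      have hcont : Continuous (fun x : ℝ => Complex.exp (Complex.I * (t:ℂ) * (x:ℂ))) :=
        Complex.continuous_exp.comp (continuous_const.mul Complex.continuous_ofReal)
      rw [aux_indep_integral_mul (hSZ n) (hSm n).aemeasurable (hZm n).aemeasurable hcont hcont]
      rw [Finset.prod_range_succ, ih, hck n]
  -- dominated convergence
  have hlim' : ∀ᵐ ω ∂P, Tendsto (fun n => S n ω) atTop (𝓝 (ξ ω)) := by
    filter_upwards [hlim, ae_all_iff.mpr hX'e, ae_all_iff.mpr hY'e] with ω h1 h2 h3
    have : (fun n => S n ω) = fun n =>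
        ∑ k ∈ Finset.range n, (X (k+1) ω ^ 2 + Y (k+1) ω ^ 2 - 2)/((k:ℝ)+1) := by
      funext n
      exact Finset.sum_congr rfl fun k _ => by
        simp only [hSdef, hZdef, h2 (k+1), h3 (k+1)]
    rw [this]
    exact h1
  have hdc : Tendsto (fun n => ∫ ω, Complex.exp (Complex.I * (t:ℂ) * (S n ω : ℂ)) ∂P)
      atTop (𝓝 (∫ ω, Complex.exp (Complex.I * (t:ℂ) * (ξ ω : ℂ)) ∂P)) := by
    refine tendsto_integral_of_dominated_convergence (fun _ => 1) ?_ ?_ ?_ ?_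
    · intro n
      exact (Complex.measurable_exp.comp
        (measurable_const.mul (Complex.measurable_ofReal.comp (hSm n)))).aestronglyMeasurable
    · exact integrable_const 1
    · intro n
      refine Filter.Eventually.of_forall fun ω => ?_
      have : (Complex.I * (t:ℂ) * ((S n ω : ℝ):ℂ)).re = 0 := by simp [Complex.mul_re]
      rw [Complex.norm_exp, this, Real.exp_zero]
    · filter_upwards [hlim'] with ω hω
      have hcont : Continuous (fun x : ℝ => Complex.exp (Complex.I * (t:ℂ) * (x:ℂ))) :=
        Complex.continuous_exp.comp (continuous_const.mul Complex.continuous_ofReal)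
      have := (hcont.tendsto (ξ ω)).comp hω
      simpa [Function.comp_def] using this
  rw [funext hfact] at hdc
  exact tendsto_nhds_unique hdc (aux_prod_tendsto t)
end
end
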